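/- arXiv:2210.09047 — 2 statements merged into one kernel-verified Lean document; each statement's English description precedes it below -/
import Mathlib

section
/- Let X be a real random variable with finite expectation and continuous cumulative distribution function F such that Δ_0(X) < ∞ and Δ̄_0(X) < ∞, and define ϱ(X) = inf{s > −1 : ∇_s(X)/Δ̄_s(X) > 1} and ϱ̄(X) = inf{s > −1 : ∇̄_s(X)/Δ_s(X) > 1}. If Δ_0(X) > Δ̄_0(X), then −1 < ϱ(X) ≤ 0 < ϱ̄(X) < 1; if Δ_0(X) < Δ̄_0(X), then −1 < ϱ̄(X) ≤ 0 < ϱ(X) < 1. -/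
open MeasureTheory Set Filter Function
open scoped ENNReal Topology

/-- The integrand `t ↦ (1/s) t (1 − t^s)` of the cumulative Tsallis entropy, with the
convention `(1 − t^0)/0 = −log t` at `s = 0`. -/
noncomputable def tsallisFn (s t : ℝ) : ℝ :=
  if s = 0 then -(t * Real.log t) else (1 / s) * (t * (1 - t ^ s))


lemma sk_repr {t : ℝ} (ht : 0 < t) (s : ℝ) :
    tsallisFn s t = t * ∫ u in t..(1:ℝ), u ^ (s - 1) := by
  have h0 : (0:ℝ) ∉ Set.uIcc t 1 := Set.notMem_uIcc_of_lt ht one_pos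
  by_cases hs : s = 0
  · subst hs
    rw [tsallisFn, if_pos rfl]
    have hcongr : ∀ u ∈ Set.uIcc t (1:ℝ), u ^ ((0:ℝ) - 1) = u⁻¹ := by
      intro u hu
      rw [show (0:ℝ)-1 = ((-1 : ℤ) : ℝ) by norm_num, Real.rpow_intCast]
      simp
    rw [intervalIntegral.integral_congr hcongr, integral_inv h0, one_div, Real.log_inv]
    ring
  · rw [tsallisFn, if_neg hs,
      integral_rpow (Or.inr ⟨by intro h; exact hs (by linarith), h0⟩)]
    have h1 : s - 1 + 1 = s := by ring
    rw [h1, Real.one_rpow]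
    ring

lemma sk_intble {t : ℝ} (ht : 0 < t) (s : ℝ) :
    IntervalIntegrable (fun u : ℝ => u ^ (s - 1)) volume t 1 :=
  intervalIntegral.intervalIntegrable_rpow (Or.inr (Set.notMem_uIcc_of_lt ht one_pos))

lemma sk_tsallisFn_zero_of_zero (s : ℝ) : tsallisFn s 0 = 0 := by
  rw [tsallisFn]; split <;> simp

lemma sk_tsallisFn_nonneg (s : ℝ) {t : ℝ} (h0 : 0 ≤ t) (h1 : t ≤ 1) : 0 ≤ tsallisFn s t := by
  rcases eq_or_lt_of_le h0 with h | h
  · rw [← h, sk_tsallisFn_zero_of_zero]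
  · rw [sk_repr h s]
    refine mul_nonneg h.le (intervalIntegral.integral_nonneg h1 (fun u hu => ?_))
    exact Real.rpow_nonneg (le_trans h.le hu.1) _

lemma sk_tsallisFn_anti {t : ℝ} (h0 : 0 ≤ t) (h1 : t ≤ 1) {s s' : ℝ} (hss : s ≤ s') :
    tsallisFn s' t ≤ tsallisFn s t := by
  rcases eq_or_lt_of_le h0 with h | h
  · rw [← h, sk_tsallisFn_zero_of_zero, sk_tsallisFn_zero_of_zero]
  · rw [sk_repr h s, sk_repr h s']
    refine mul_le_mul_of_nonneg_left ?_ h.le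
    refine intervalIntegral.integral_mono_on h1 (sk_intble h s') (sk_intble h s) (fun u hu => ?_)
    exact Real.rpow_le_rpow_of_exponent_ge (lt_of_lt_of_le h hu.1) hu.2 (by linarith)


lemma sk_tsallisFn_zero_of_zero' (s : ℝ) : tsallisFn s 0 = 0 := by
  rw [tsallisFn]; split <;> simp

-- continuity of tsallisFn in s at a nonzero point σ
lemma sk_tendsto_tsallisFn_ne {t : ℝ} (h0 : 0 ≤ t) {σ : ℝ} (hσ : σ ≠ 0)
    {u : ℕ → ℝ} (hu : Tendsto u atTop (𝓝 σ)) (hne : ∀ n, u n ≠ 0) :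
    Tendsto (fun n => tsallisFn (u n) t) atTop (𝓝 (tsallisFn σ t)) := by
  rcases eq_or_lt_of_le h0 with h | h
  · simp only [← h, sk_tsallisFn_zero_of_zero']
    exact tendsto_const_nhds
  · have hrw : ∀ {s : ℝ}, s ≠ 0 →
        tsallisFn s t = (1 / s) * (t * (1 - Real.exp (s * Real.log t))) := by
      intro s hs
      rw [tsallisFn, if_neg hs, Real.rpow_def_of_pos h, mul_comm (Real.log t) s]
    have hexp : Tendsto (fun n => Real.exp (u n * Real.log t)) atTop
        (𝓝 (Real.exp (σ * Real.log t))) :=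
      (Real.continuous_exp.tendsto _).comp (hu.mul_const _)
    have h2 : Tendsto (fun n => (1 / u n) * (t * (1 - Real.exp (u n * Real.log t)))) atTop
        (𝓝 ((1 / σ) * (t * (1 - Real.exp (σ * Real.log t))))) :=
      (tendsto_const_nhds.div hu hσ).mul (tendsto_const_nhds.mul
        (tendsto_const_nhds.sub hexp))
    rw [hrw hσ]
    exact h2.congr (fun n => (hrw (hne n)).symm)

-- continuity of tsallisFn in s at σ = 0 (via slope of 1 - exp(s log t))
lemma sk_tendsto_tsallisFn_zero {t : ℝ} (h0 : 0 ≤ t)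
    {u : ℕ → ℝ} (hu : Tendsto u atTop (𝓝 0)) (hne : ∀ n, u n ≠ 0) :
    Tendsto (fun n => tsallisFn (u n) t) atTop (𝓝 (tsallisFn 0 t)) := by
  rcases eq_or_lt_of_le h0 with h | h
  · simp only [← h, sk_tsallisFn_zero_of_zero']
    exact tendsto_const_nhds
  · set g : ℝ → ℝ := fun s => 1 - Real.exp (s * Real.log t) with hg
    have hd : HasDerivAt g (-Real.log t) 0 := by
      have h1 : HasDerivAt (fun s : ℝ => s * Real.log t) (Real.log t) 0 := by
        simpa using (hasDerivAt_id (0:ℝ)).mul_const (Real.log t)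
      have h2 := h1.exp
      simpa using h2.const_sub 1
    have hslope : Tendsto (slope g 0) (𝓝[≠] 0) (𝓝 (-Real.log t)) :=
      hasDerivAt_iff_tendsto_slope.1 hd
    have huw : Tendsto u atTop (𝓝[≠] 0) := by
      refine tendsto_nhdsWithin_iff.2 ⟨hu, Eventually.of_forall (fun n => hne n)⟩
    have hmain : Tendsto (fun n => t * slope g 0 (u n)) atTop (𝓝 (t * -Real.log t)) :=
      tendsto_const_nhds.mul (hslope.comp huw)
    have hrw : ∀ n, tsallisFn (u n) t = t * slope g 0 (u n) := by
      intro n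
      rw [tsallisFn, if_neg (hne n), Real.rpow_def_of_pos h,
        mul_comm (Real.log t) (u n), slope_def_field]
      simp only [hg, zero_mul, Real.exp_zero, sub_zero]
      field_simp
      ring
    have hrw0 : tsallisFn 0 t = t * -Real.log t := by
      rw [tsallisFn, if_pos rfl]; ring
    rw [hrw0]
    exact hmain.congr (fun n => (hrw n).symm)

lemma sk_rpow_anti {b : ℝ} (hb0 : 0 ≤ b) (hb1 : b ≤ 1) {p q : ℝ} (hp : 0 < p) (hpq : p ≤ q) :
    b ^ q ≤ b ^ p := by
  rcases eq_or_lt_of_le hb0 with h | h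
  · rw [← h, Real.zero_rpow (lt_of_lt_of_le hp hpq).ne', Real.zero_rpow hp.ne']
  · exact Real.rpow_le_rpow_of_exponent_ge h hb1 hpq

lemma sk_knum_nonneg {v s : ℝ} (hv0 : 0 ≤ v) (hv1 : v ≤ 1) (hs : 0 ≤ s + 1) :
    0 ≤ 1 - (1 - v) ^ (s + 1) :=
  sub_nonneg.2 (Real.rpow_le_one (by linarith) (by linarith) hs)

lemma sk_k_nonneg {v s : ℝ} (hv0 : 0 ≤ v) (hv1 : v ≤ 1) (hs : 0 ≤ s + 1) :
    0 ≤ (1 - (1 - v) ^ (s + 1)) / v := div_nonneg (sk_knum_nonneg hv0 hv1 hs) hv0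

lemma sk_k_mono {v : ℝ} (hv0 : 0 ≤ v) (hv1 : v ≤ 1) {s s' : ℝ} (hs : -1 < s) (hss : s ≤ s') :
    (1 - (1 - v) ^ (s + 1)) / v ≤ (1 - (1 - v) ^ (s' + 1)) / v := by
  rcases eq_or_lt_of_le hv0 with h | h
  · rw [← h]; simp
  · have h2 := sk_rpow_anti (b := 1 - v) (by linarith) (by linarith)
      (by linarith : (0:ℝ) < s + 1) (by linarith : s + 1 ≤ s' + 1)
    exact (div_le_div_iff_of_pos_right h).2 (by linarith)

lemma sk_k_one_le {v : ℝ} (hv0 : 0 ≤ v) (hv1 : v ≤ 1) :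
    (1 - (1 - v) ^ ((1:ℝ) + 1)) / v ≤ 2 * ((1 - (1 - v) ^ ((0:ℝ) + 1)) / v) := by
  have h2 : ((1:ℝ) - v) ^ ((1:ℝ) + 1) = (1 - v) ^ (2:ℕ) := by
    rw [show (1:ℝ)+1 = ((2:ℕ):ℝ) by norm_num, Real.rpow_natCast]
  have h1 : ((1:ℝ) - v) ^ ((0:ℝ) + 1) = 1 - v := by rw [zero_add, Real.rpow_one]
  rcases eq_or_lt_of_le hv0 with h | h
  · rw [← h]; simp
  · have e1 : (1 - ((1:ℝ) - v) ^ (2:ℕ)) / v = 2 - v := by field_simp; ring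
    have e2 : (1 - ((1:ℝ) - v)) / v = 1 := by field_simp; ring
    rw [h2, h1, e1, e2]
    linarith

lemma sk_tendsto_rpow_exponent {b : ℝ} (hb : 0 < b) {σ : ℝ} {u : ℕ → ℝ}
    (hu : Tendsto u atTop (𝓝 σ)) : Tendsto (fun n => b ^ u n) atTop (𝓝 (b ^ σ)) := by
  simp only [Real.rpow_def_of_pos hb]
  exact (Real.continuous_exp.tendsto _).comp (tendsto_const_nhds.mul hu)

lemma sk_tendsto_k {v : ℝ} (hv1 : v ≤ 1) {σ : ℝ} (hσ : 0 < σ + 1)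
    {u : ℕ → ℝ} (hu : Tendsto u atTop (𝓝 σ)) :
    Tendsto (fun n => (1 - (1 - v) ^ (u n + 1)) / v) atTop
      (𝓝 ((1 - (1 - v) ^ (σ + 1)) / v)) := by
  have hu1 : Tendsto (fun n => u n + 1) atTop (𝓝 (σ + 1)) := hu.add tendsto_const_nhds
  rcases eq_or_lt_of_le (sub_nonneg.2 hv1) with h | h
  · rw [← h]
    have hev : ∀ᶠ n in atTop, 0 < u n + 1 := hu1.eventually_const_lt hσ
    have hrw : ∀ᶠ n in atTop, (1 - (0:ℝ) ^ (u n + 1)) / v = 1 / v := by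
      filter_upwards [hev] with n hn
      rw [Real.zero_rpow hn.ne']
      norm_num
    rw [Real.zero_rpow hσ.ne']
    refine Tendsto.congr' (hrw.mono (fun n hn => hn.symm)) ?_
    norm_num
  · exact (tendsto_const_nhds.sub (sk_tendsto_rpow_exponent h hu1)).div_const v

lemma sk_tendsto_k_neg_one {v : ℝ} (hv : v < 1)
    {u : ℕ → ℝ} (hu : Tendsto u atTop (𝓝 (-1))) :
    Tendsto (fun n => (1 - (1 - v) ^ (u n + 1)) / v) atTop (𝓝 0) := by
  have hb : 0 < 1 - v := by linarith
  have hu1 : Tendsto (fun n => u n + 1) atTop (𝓝 ((-1:ℝ) + 1)) := hu.add tendsto_const_nhds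
  have h := ((tendsto_const_nhds : Tendsto (fun _ : ℕ => (1:ℝ)) atTop (𝓝 1)).sub
    (sk_tendsto_rpow_exponent hb hu1)).div_const v
  have heq : (1 - (1 - v) ^ ((-1:ℝ) + 1)) / v = 0 := by
    norm_num
  rwa [heq] at h

structure IsCdfLike (μ : Measure ℝ) (F : ℝ → ℝ) : Prop where
  prob : IsProbabilityMeasure μ
  hF : ∀ x, F x = (μ (Iic x)).toReal
  cont : Continuous F

namespace IsCdfLike
variable {μ : Measure ℝ} {F : ℝ → ℝ}

lemma measIic (h : IsCdfLike μ F) (x : ℝ) : μ (Iic x) = ENNReal.ofReal (F x) := by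
  haveI := h.prob
  rw [h.hF x, ENNReal.ofReal_toReal (measure_ne_top μ _)]

lemma nonneg (h : IsCdfLike μ F) (x : ℝ) : 0 ≤ F x := by rw [h.hF x]; exact ENNReal.toReal_nonneg

lemma le_one (h : IsCdfLike μ F) (x : ℝ) : F x ≤ 1 := by
  haveI := h.prob
  rw [h.hF x]
  calc (μ (Iic x)).toReal ≤ (1 : ℝ≥0∞).toReal :=
        ENNReal.toReal_mono ENNReal.one_ne_top prob_le_one
  _ = 1 := by simp

lemma mono (h : IsCdfLike μ F) : Monotone F := by
  intro a b hab
  haveI := h.prob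
  rw [h.hF a, h.hF b]
  exact ENNReal.toReal_mono (measure_ne_top μ _) (measure_mono (Iic_subset_Iic.2 hab))

lemma tendsto_atTop (h : IsCdfLike μ F) : Tendsto F atTop (𝓝 1) := by
  haveI := h.prob
  have h1 := tendsto_measure_Iic_atTop (μ := μ)
  rw [measure_univ] at h1
  have h2 := (ENNReal.tendsto_toReal ENNReal.one_ne_top).comp h1
  simp only [ENNReal.toReal_one] at h2
  exact h2.congr (fun x => (h.hF x).symm)

lemma tendsto_atBot (h : IsCdfLike μ F) : Tendsto F atBot (𝓝 0) := by
  haveI := h.prob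
  have h0 : Tendsto (fun x : ℝ => μ (Iic x)) atBot (𝓝 (μ (⋂ x : ℝ, Iic x))) :=
    tendsto_measure_iInter_atBot (fun i => measurableSet_Iic.nullMeasurableSet)
      (fun a b hab => Iic_subset_Iic.2 hab) ⟨0, measure_ne_top μ _⟩
  have hempty : (⋂ x : ℝ, Iic x) = ∅ := by
    ext y
    simp only [mem_iInter, mem_Iic, mem_empty_iff_false, iff_false, not_forall, not_le]
    exact ⟨y - 1, by linarith⟩
  rw [hempty, measure_empty] at h0
  have h2 := (ENNReal.tendsto_toReal (by simp)).comp h0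
  simp only [ENNReal.toReal_zero] at h2
  exact h2.congr (fun x => (h.hF x).symm)

lemma map_eq (h : IsCdfLike μ F) : μ.map F = volume.restrict (Icc 0 1) := by
  haveI := h.prob
  haveI : IsProbabilityMeasure (μ.map F) :=
    Measure.isProbabilityMeasure_map h.cont.measurable.aemeasurable
  refine Measure.ext_of_Iic _ _ (fun u => ?_)
  rw [Measure.map_apply h.cont.measurable measurableSet_Iic,
    Measure.restrict_apply measurableSet_Iic]
  rcases lt_or_ge u 0 with hu | hu
  · have h1 : F ⁻¹' Iic u = ∅ := by
      ext x
      simp only [mem_preimage, mem_Iic, mem_empty_iff_false, iff_false, not_le]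
      exact lt_of_lt_of_le hu (h.nonneg x)
    have h2 : Iic u ∩ Icc (0:ℝ) 1 = ∅ := by
      ext x
      simp only [mem_inter_iff, mem_Iic, mem_Icc, mem_empty_iff_false, iff_false, not_and]
      intro hx hx0
      linarith
    simp [h1, h2]
  rcases le_or_gt 1 u with hu1 | hu1
  · have h1 : F ⁻¹' Iic u = univ := by
      ext x
      simp only [mem_preimage, mem_Iic, mem_univ, iff_true]
      exact le_trans (h.le_one x) hu1
    have h2 : Iic u ∩ Icc (0:ℝ) 1 = Icc 0 1 :=
      inter_eq_right.2 (fun x hx => le_trans hx.2 hu1)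
    rw [h1, h2, measure_univ, Real.volume_Icc]
    norm_num
  · have h2 : Iic u ∩ Icc (0:ℝ) 1 = Icc 0 u := by
      ext x
      simp only [mem_inter_iff, mem_Iic, mem_Icc]
      constructor
      · rintro ⟨h1, h2, h3⟩; exact ⟨h2, h1⟩
      · rintro ⟨h1, h2⟩; exact ⟨h2, h1, le_trans h2 hu1.le⟩
    rw [h2, Real.volume_Icc]
    by_cases hA : (F ⁻¹' Iic u).Nonempty
    · have hbdd : BddAbove (F ⁻¹' Iic u) := by
        obtain ⟨M, hM⟩ := eventually_atTop.1 (h.tendsto_atTop.eventually_const_lt hu1)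
        refine ⟨M, fun a ha => ?_⟩
        by_contra hc
        push_neg at hc
        exact absurd ha (not_le.2 (hM a hc.le))
      have hcl : IsClosed (F ⁻¹' Iic u) := isClosed_Iic.preimage h.cont
      set c := sSup (F ⁻¹' Iic u) with hc
      have hc_mem : c ∈ F ⁻¹' Iic u := hcl.csSup_mem hA hbdd
      have hset : F ⁻¹' Iic u = Iic c := by
        refine subset_antisymm (fun a ha => le_csSup hbdd ha) (fun a ha => ?_)
        exact mem_preimage.2 (le_trans (h.mono ha) hc_mem)
      have hFc : F c = u := by
        refine le_antisymm hc_mem ?_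
        by_contra hlt
        push_neg at hlt
        have hev : ∀ᶠ x in 𝓝 c, F x < u :=
          (h.cont.continuousAt).eventually_lt_const hlt
        obtain ⟨b, hb, hbu⟩ := hev.exists_gt
        have : b ∈ F ⁻¹' Iic u := mem_preimage.2 hbu.le
        rw [hset] at this
        exact absurd this (not_le.2 hb)
      rw [hset, h.measIic, hFc, sub_zero]
    · rw [not_nonempty_iff_eq_empty.1 hA]
      have hu0 : u = 0 := by
        by_contra hne
        have hupos : 0 < u := lt_of_le_of_ne hu (Ne.symm hne)
        obtain ⟨x, hx⟩ := (h.tendsto_atBot.eventually_lt_const hupos).exists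
        exact absurd (not_nonempty_iff_eq_empty.1 hA ▸ (mem_preimage.2 hx.le) :
          x ∈ (∅ : Set ℝ)) (notMem_empty x)
      simp [hu0]

lemma level (h : IsCdfLike μ F) (c : ℝ) : μ {t | F t = c} = 0 := by
  have hs : {t | F t = c} = F ⁻¹' {c} := rfl
  rw [hs, ← Measure.map_apply h.cont.measurable (measurableSet_singleton c), h.map_eq,
    Measure.restrict_apply (measurableSet_singleton c)]
  exact measure_mono_null inter_subset_left Real.volume_singleton

lemma band (h : IsCdfLike μ F) {α β : ℝ} (hα : 0 < α) (hαβ : α < β) (hβ : β < 1) :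
    ∃ c d : ℝ, c < d ∧ ∀ x ∈ Ioo c d, α < F x ∧ F x < β := by
  set γ := (α + β) / 2 with hγ
  have hγα : α < γ := by rw [hγ]; linarith
  have hγβ : γ < β := by rw [hγ]; linarith
  have hγ0 : 0 < γ := lt_trans hα hγα
  have hγ1 : γ < 1 := lt_trans hγβ hβ
  obtain ⟨x₁, hx₁⟩ := (h.tendsto_atBot.eventually_lt_const hγ0).exists
  obtain ⟨x₂, hx₂⟩ := (h.tendsto_atTop.eventually_const_lt hγ1).exists
  have hx12 : x₁ ≤ x₂ := by
    by_contra hc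
    push_neg at hc
    exact absurd (h.mono hc.le) (not_le.2 (lt_trans hx₁ hx₂))
  obtain ⟨a, _, ha⟩ := intermediate_value_Icc hx12 h.cont.continuousOn
    (⟨hx₁.le, hx₂.le⟩ : γ ∈ Icc (F x₁) (F x₂))
  have hev : ∀ᶠ x in 𝓝 a, F x ∈ Ioo α β :=
    h.cont.continuousAt (isOpen_Ioo.mem_nhds (by rw [ha]; exact ⟨hγα, hγβ⟩))
  obtain ⟨ε, hε, hball⟩ := Metric.eventually_nhds_iff_ball.1 hev
  refine ⟨a - ε, a + ε, by linarith, fun x hx => ?_⟩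
  have : x ∈ Metric.ball a ε := by
    rw [Real.ball_eq_Ioo]
    exact hx
  exact hball x this

end IsCdfLike




structure MbarData (μ : Measure ℝ) (F mbar : ℝ → ℝ) : Prop where
  cdf : IsCdfLike μ F
  habs : ∫⁻ y, ENNReal.ofReal |y| ∂μ ≠ ⊤
  hm : ∀ t, mbar t = if 0 < F t then (∫ x in Iic t, F x) / F t else 0

namespace MbarData
variable {μ : Measure ℝ} {F mbar : ℝ → ℝ}

lemma lint_Iic_lt_top (h : MbarData μ F mbar) (t : ℝ) :
    ∫⁻ x in Iic t, ENNReal.ofReal (F x) ∂volume < ⊤ := by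
  haveI := h.cdf.prob
  have hmeas : Measurable (uncurry fun x y => (Iic x).indicator (1 : ℝ → ℝ≥0∞) y) := by
    have heq : (uncurry fun x y => (Iic x).indicator (1 : ℝ → ℝ≥0∞) y)
        = {p : ℝ × ℝ | p.2 ≤ p.1}.indicator 1 := by
      ext ⟨x, y⟩
      simp [uncurry, Set.indicator_apply, Set.mem_Iic]
    rw [heq]
    exact measurable_const.indicator (measurableSet_le measurable_snd measurable_fst)
  calc ∫⁻ x in Iic t, ENNReal.ofReal (F x) ∂volume
      = ∫⁻ x in Iic t, ∫⁻ y, (Iic x).indicator 1 y ∂μ ∂volume := by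
        refine lintegral_congr fun x => ?_
        rw [lintegral_indicator_one measurableSet_Iic, h.cdf.measIic]
    _ = ∫⁻ y, ∫⁻ x in Iic t, (Iic x).indicator 1 y ∂volume ∂μ :=
        lintegral_lintegral_swap hmeas.aemeasurable
    _ = ∫⁻ y, volume (Ici y ∩ Iic t) ∂μ := by
        refine lintegral_congr fun y => ?_
        have hrw : ∀ x : ℝ, (Iic x).indicator (1 : ℝ → ℝ≥0∞) y
            = (Ici y).indicator (1 : ℝ → ℝ≥0∞) x := by
          intro x
          simp [Set.indicator_apply, Set.mem_Iic, Set.mem_Ici]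
        simp_rw [hrw]
        rw [lintegral_indicator measurableSet_Ici]
        simp only [Pi.one_apply]
        rw [setLIntegral_one, Measure.restrict_apply measurableSet_Ici]
    _ ≤ ∫⁻ y, ENNReal.ofReal (|t| + |y|) ∂μ := by
        refine lintegral_mono fun y => ?_
        rw [Ici_inter_Iic, Real.volume_Icc]
        exact ENNReal.ofReal_le_ofReal (by cases abs_cases t <;> cases abs_cases y <;> linarith)
    _ = ∫⁻ y, (ENNReal.ofReal |t| + ENNReal.ofReal |y|) ∂μ :=
        lintegral_congr fun y => ENNReal.ofReal_add (abs_nonneg t) (abs_nonneg y)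
    _ = ENNReal.ofReal |t| + ∫⁻ y, ENNReal.ofReal |y| ∂μ := by
        rw [lintegral_add_left measurable_const, lintegral_const, measure_univ, mul_one]
    _ < ⊤ := ENNReal.add_lt_top.2 ⟨ENNReal.ofReal_lt_top, lt_top_iff_ne_top.2 h.habs⟩

lemma integrableOn (h : MbarData μ F mbar) (t : ℝ) : IntegrableOn F (Iic t) volume := by
  constructor
  · exact h.cdf.cont.aestronglyMeasurable.restrict
  · rw [hasFiniteIntegral_iff_ofReal (Eventually.of_forall fun x => h.cdf.nonneg x)]
    exact h.lint_Iic_lt_top t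

lemma G_mono (h : MbarData μ F mbar) : Monotone (fun t => ∫ x in Iic t, F x) := by
  intro a b hab
  exact setIntegral_mono_set (h.integrableOn b)
    (Eventually.of_forall fun x => h.cdf.nonneg x)
    (HasSubset.Subset.eventuallyLE (Iic_subset_Iic.2 hab))

lemma mbar_meas (h : MbarData μ F mbar) : Measurable mbar := by
  have hG : Measurable (fun t => ∫ x in Iic t, F x) := h.G_mono.measurable
  have heq : mbar = fun t => if 0 < F t then (∫ x in Iic t, F x) / F t else 0 := funext h.hm
  rw [heq]
  exact Measurable.ite (measurableSet_lt measurable_const h.cdf.cont.measurable)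
    (hG.div h.cdf.cont.measurable) measurable_const

lemma mbar_nonneg (h : MbarData μ F mbar) (t : ℝ) : 0 ≤ mbar t := by
  rw [h.hm t]
  split
  · exact div_nonneg (setIntegral_nonneg measurableSet_Iic fun x _ => h.cdf.nonneg x)
      (le_of_lt ‹_›)
  · exact le_refl 0

lemma fub (h : MbarData μ F mbar) {s : ℝ} (hs : 0 ≤ s + 1) :
    ∫⁻ t, ENNReal.ofReal ((1 - (1 - F t) ^ (s+1)) / F t * mbar t) ∂μ
      = ∫⁻ x, ENNReal.ofReal (F x)
          * ∫⁻ u in Ioc (F x) 1, ENNReal.ofReal ((1 - (1 - u) ^ (s+1)) / u ^ 2) := by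
  haveI := h.cdf.prob
  set φ : ℝ → ℝ≥0∞ := fun u => ENNReal.ofReal ((1 - (1 - u) ^ (s+1)) / u ^ 2) with hφ
  have hφm : Measurable φ := by fun_prop
  have hFm : Measurable F := h.cdf.cont.measurable
  have hstepA : ∫⁻ t, ENNReal.ofReal ((1 - (1 - F t) ^ (s+1)) / F t * mbar t) ∂μ
      = ∫⁻ t, φ (F t) * ∫⁻ x, (Iic t).indicator (fun x => ENNReal.ofReal (F x)) x ∂volume ∂μ := by
    refine lintegral_congr_ae ?_
    filter_upwards [measure_eq_zero_iff_ae_notMem.1 (h.cdf.level 0)] with t ht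
    have hFt : 0 < F t := lt_of_le_of_ne (h.cdf.nonneg t) (Ne.symm ht)
    rw [h.hm t, if_pos hFt]
    have halg : (1 - (1 - F t) ^ (s+1)) / F t * ((∫ x in Iic t, F x) / F t)
        = (1 - (1 - F t) ^ (s+1)) / (F t) ^ 2 * ∫ x in Iic t, F x := by
      rw [div_mul_div_comm, div_mul_eq_mul_div, sq]
    rw [halg, ENNReal.ofReal_mul
        (div_nonneg (sk_knum_nonneg (h.cdf.nonneg t) (h.cdf.le_one t) hs) (sq_nonneg _)),
      ofReal_integral_eq_lintegral_ofReal (h.integrableOn t)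
        (Eventually.of_forall fun x => h.cdf.nonneg x),
      ← lintegral_indicator measurableSet_Iic]
  rw [hstepA]
  have hpull : ∀ t : ℝ, φ (F t) * ∫⁻ x, (Iic t).indicator (fun x => ENNReal.ofReal (F x)) x ∂volume
      = ∫⁻ x, φ (F t) * (Iic t).indicator (fun x => ENNReal.ofReal (F x)) x ∂volume := by
    intro t
    exact (lintegral_const_mul _
      ((ENNReal.measurable_ofReal.comp hFm).indicator measurableSet_Iic)).symm
  simp_rw [hpull]
  have hmeas2 : Measurable (uncurry fun t x =>
      φ (F t) * (Iic t).indicator (fun x => ENNReal.ofReal (F x)) x) := by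
    have heq : (uncurry fun t x =>
        φ (F t) * (Iic t).indicator (fun x => ENNReal.ofReal (F x)) x)
        = fun p : ℝ × ℝ => φ (F p.1)
            * {q : ℝ × ℝ | q.2 ≤ q.1}.indicator (fun q => ENNReal.ofReal (F q.2)) p := by
      ext ⟨t, x⟩
      simp [uncurry, Set.indicator_apply, Set.mem_Iic]
    rw [heq]
    exact ((hφm.comp (hFm.comp measurable_fst)).mul
      (((ENNReal.measurable_ofReal.comp (hFm.comp measurable_snd))).indicator
        (measurableSet_le measurable_snd measurable_fst)))
  rw [lintegral_lintegral_swap hmeas2.aemeasurable]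
  refine lintegral_congr fun x => ?_
  have hrw : ∀ t : ℝ, φ (F t) * (Iic t).indicator (fun x => ENNReal.ofReal (F x)) x
      = ENNReal.ofReal (F x) * (Ici x).indicator (fun t => φ (F t)) t := by
    intro t
    by_cases hxt : x ≤ t <;>
      simp [Set.indicator_apply, Set.mem_Iic, Set.mem_Ici, hxt, mul_comm]
  simp_rw [hrw]
  rw [show ∫⁻ t, ENNReal.ofReal (F x) * (Ici x).indicator (fun t => φ (F t)) t ∂μ
      = ENNReal.ofReal (F x) * ∫⁻ t, (Ici x).indicator (fun t => φ (F t)) t ∂μ from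
      lintegral_const_mul _ ((hφm.comp hFm).indicator measurableSet_Ici),
    lintegral_indicator measurableSet_Ici]
  congr 1
  have hsetae : (Ici x : Set ℝ) =ᵐ[μ] {t | F x < F t} := by
    rw [eventuallyEq_set]
    filter_upwards [measure_eq_zero_iff_ae_notMem.1 (h.cdf.level (F x))] with t ht
    simp only [mem_Ici, mem_setOf_eq]
    constructor
    · intro hxt
      exact lt_of_le_of_ne (h.cdf.mono hxt) (fun hc => ht hc.symm)
    · intro hlt
      by_contra hc
      push_neg at hc
      exact absurd (h.cdf.mono hc.le) (not_le.2 hlt)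
  rw [setLIntegral_congr hsetae]
  have hpre : {t | F x < F t} = F ⁻¹' (Ioi (F x)) := rfl
  rw [hpre, ← setLIntegral_map measurableSet_Ioi hφm hFm, h.cdf.map_eq,
    Measure.restrict_restrict measurableSet_Ioi]
  have hset2 : Ioi (F x) ∩ Icc 0 1 = Ioc (F x) 1 := by
    ext u
    simp only [mem_inter_iff, mem_Ioi, mem_Icc, mem_Ioc]
    constructor
    · rintro ⟨h1, _, h3⟩; exact ⟨h1, h3⟩
    · rintro ⟨h1, h2⟩; exact ⟨h1, le_trans (h.cdf.nonneg x) h1.le, h2⟩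
  rw [hset2]

lemma h1eq (h : MbarData μ F mbar) :
    ∫⁻ t, ENNReal.ofReal ((1 - (1 - F t) ^ ((0:ℝ)+1)) / F t * mbar t) ∂μ
      = ∫⁻ x, ENNReal.ofReal (tsallisFn 0 (F x)) := by
  rw [h.fub (by norm_num)]
  refine lintegral_congr fun x => ?_
  rcases eq_or_lt_of_le (h.cdf.nonneg x) with hx | hx
  · rw [← hx]
    simp [tsallisFn]
  · have hx1 := h.cdf.le_one x
    have hinner : (∫⁻ u in Ioc (F x) 1, ENNReal.ofReal ((1 - (1 - u) ^ ((0:ℝ)+1)) / u ^ 2))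
        = ENNReal.ofReal (-Real.log (F x)) := by
      have hcongr : ∀ u ∈ Ioc (F x) 1, ENNReal.ofReal ((1 - (1 - u) ^ ((0:ℝ)+1)) / u ^ 2)
          = ENNReal.ofReal u⁻¹ := by
        intro u hu
        have hu0 : 0 < u := lt_trans hx hu.1
        congr 1
        rw [zero_add, Real.rpow_one]
        field_simp
        ring
      rw [setLIntegral_congr_fun measurableSet_Ioc hcongr]
      have hint : IntegrableOn (fun u : ℝ => u⁻¹) (Ioc (F x) 1) volume := by
        apply (ContinuousOn.integrableOn_Icc ?_).mono_set Ioc_subset_Icc_self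
        exact ContinuousOn.inv₀ continuousOn_id (fun u hu => (lt_of_lt_of_le hx hu.1).ne')
      have hnn : 0 ≤ᵐ[volume.restrict (Ioc (F x) 1)] fun u : ℝ => u⁻¹ := by
        rw [EventuallyLE, ae_restrict_iff' measurableSet_Ioc]
        exact ae_of_all _ fun u hu => inv_nonneg.2 (lt_trans hx hu.1).le
      rw [← ofReal_integral_eq_lintegral_ofReal hint hnn]
      congr 1
      rw [← intervalIntegral.integral_of_le hx1,
        integral_inv (Set.notMem_uIcc_of_lt hx one_pos),
        Real.log_div one_ne_zero hx.ne', Real.log_one, zero_sub]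
    rw [hinner, ← ENNReal.ofReal_mul hx.le]
    congr 1
    rw [tsallisFn, if_pos rfl]
    ring

lemma h2eq (h : MbarData μ F mbar) :
    ∫⁻ t, ENNReal.ofReal ((1 - (1 - F t) ^ ((1:ℝ)+1)) / F t * mbar t) ∂μ
      = ∫⁻ x, ENNReal.ofReal (F x * (F x - 1 - 2 * Real.log (F x))) := by
  rw [h.fub (by norm_num)]
  refine lintegral_congr fun x => ?_
  rcases eq_or_lt_of_le (h.cdf.nonneg x) with hx | hx
  · rw [← hx]
    simp
  · have hx1 := h.cdf.le_one x
    have hinner : (∫⁻ u in Ioc (F x) 1, ENNReal.ofReal ((1 - (1 - u) ^ ((1:ℝ)+1)) / u ^ 2))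
        = ENNReal.ofReal (F x - 1 - 2 * Real.log (F x)) := by
      have hcongr : ∀ u ∈ Ioc (F x) 1, ENNReal.ofReal ((1 - (1 - u) ^ ((1:ℝ)+1)) / u ^ 2)
          = ENNReal.ofReal (2 * u⁻¹ - 1) := by
        intro u hu
        have hu0 : 0 < u := lt_trans hx hu.1
        congr 1
        rw [show (1:ℝ)+1 = ((2:ℕ):ℝ) by norm_num, Real.rpow_natCast]
        field_simp
        ring
      rw [setLIntegral_congr_fun measurableSet_Ioc hcongr]
      have hcont : ContinuousOn (fun u : ℝ => 2 * u⁻¹ - 1) (Icc (F x) 1) := by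
        apply ContinuousOn.sub ?_ continuousOn_const
        exact continuousOn_const.mul (ContinuousOn.inv₀ continuousOn_id
          (fun u hu => (lt_of_lt_of_le hx hu.1).ne'))
      have hint : IntegrableOn (fun u : ℝ => 2 * u⁻¹ - 1) (Ioc (F x) 1) volume :=
        (ContinuousOn.integrableOn_Icc hcont).mono_set Ioc_subset_Icc_self
      have hnn : 0 ≤ᵐ[volume.restrict (Ioc (F x) 1)] fun u : ℝ => 2 * u⁻¹ - 1 := by
        rw [EventuallyLE, ae_restrict_iff' measurableSet_Ioc]
        refine ae_of_all _ fun u hu => ?_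
        have hu0 : 0 < u := lt_trans hx hu.1
        have hinv : 1 ≤ u⁻¹ := one_le_inv_iff₀.2 ⟨hu0, hu.2⟩
        simp only [Pi.zero_apply]
        linarith
      rw [← ofReal_integral_eq_lintegral_ofReal hint hnn]
      congr 1
      rw [← intervalIntegral.integral_of_le hx1]
      have hii : IntervalIntegrable (fun u : ℝ => 2 * u⁻¹) volume (F x) 1 := by
        apply ContinuousOn.intervalIntegrable
        rw [Set.uIcc_of_le hx1]
        exact continuousOn_const.mul (ContinuousOn.inv₀ continuousOn_id
          (fun u hu => (lt_of_lt_of_le hx hu.1).ne'))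
      rw [intervalIntegral.integral_sub hii intervalIntegrable_const,
        intervalIntegral.integral_const_mul,
        integral_inv (Set.notMem_uIcc_of_lt hx one_pos),
        Real.log_div one_ne_zero hx.ne', Real.log_one, zero_sub, integral_one]
      ring
    rw [hinner, ← ENNReal.ofReal_mul hx.le]

end MbarData


lemma sk_one_lt_div {a b : ℝ≥0∞} (hba : b < a) (hb : b ≠ ⊤) : 1 < a / b := by
  rcases eq_or_ne b 0 with h0 | h0
  · subst h0
    rw [div_eq_mul_inv, ENNReal.inv_zero, ENNReal.mul_top (by simpa using hba.ne')]
    exact ENNReal.one_lt_top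
  · exact (ENNReal.lt_div_iff_mul_lt (Or.inl h0) (Or.inl hb)).2 (by rwa [one_mul])

lemma sk_lt_of_one_lt_div {a b : ℝ≥0∞} (h : 1 < a / b) : b < a := by
  by_contra hc
  push_neg at hc
  exact absurd (ENNReal.div_le_of_le_mul (by rwa [one_mul])) (not_le.2 h)

lemma sk_seq_tendsto : Tendsto (fun n : ℕ => ((n:ℝ)+2)⁻¹) atTop (𝓝 0) := by
  have h2 : Tendsto (fun n : ℕ => (n:ℝ)+2) atTop atTop :=
    tendsto_atTop_add_const_right _ 2 tendsto_natCast_atTop_atTop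
  exact h2.inv_tendsto_atTop

lemma sk_seq_pos (n : ℕ) : 0 < ((n:ℝ)+2)⁻¹ := by positivity

lemma sk_seq_le_half (n : ℕ) : ((n:ℝ)+2)⁻¹ ≤ 1/2 := by
  have h : (2:ℝ) ≤ (n:ℝ)+2 := by
    have := Nat.cast_nonneg (α := ℝ) n
    linarith
  rw [one_div]
  exact inv_anti₀ two_pos h

lemma sk_meas_tsallis (s : ℝ) : Measurable (tsallisFn s) := by
  have heq : tsallisFn s
      = fun t => if s = 0 then -(t * Real.log t) else (1 / s) * (t * (1 - t ^ s)) := rfl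
  rw [heq]
  by_cases hs : s = 0
  · simp only [if_pos hs]
    exact (measurable_id.mul Real.measurable_log).neg
  · simp only [if_neg hs]
    fun_prop

lemma sk_master {Ω : Type*} [MeasureSpace Ω] [IsProbabilityMeasure (volume : Measure Ω)]
    (X : Ω → ℝ) (hXm : Measurable X) (hXint : Integrable X)
    (F Fb : ℝ → ℝ)
    (hF : ∀ x, F x = ((volume : Measure Ω) {ω | X ω ≤ x}).toReal)
    (hFb : ∀ x, Fb x = ((volume : Measure Ω) {ω | x < X ω}).toReal)
    (hFcont : Continuous F)
    (mbar mrl : ℝ → ℝ)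
    (hmbar : ∀ t, mbar t = if 0 < F t then (∫ x in Iic t, F x) / F t else 0)
    (hmrl : ∀ t, mrl t = if 0 < Fb t then (∫ x in Ioi t, Fb x) / Fb t else 0)
    (Δ Δb Nab Nabb : ℝ → ℝ≥0∞)
    (hΔ : ∀ s : ℝ, Δ s = ∫⁻ x : ℝ, ENNReal.ofReal (tsallisFn s (F x)))
    (hΔb : ∀ s : ℝ, Δb s = ∫⁻ x : ℝ, ENNReal.ofReal (tsallisFn s (Fb x)))
    (hNab : ∀ s : ℝ, Nab s = ∫⁻ ω, ENNReal.ofReal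
        (((1 - (1 - F (X ω)) ^ (s + 1)) / F (X ω)) * mbar (X ω)) ∂(volume : Measure Ω))
    (hNabb : ∀ s : ℝ, Nabb s = ∫⁻ ω, ENNReal.ofReal
        (((1 - (1 - Fb (X ω)) ^ (s + 1)) / Fb (X ω)) * mrl (X ω)) ∂(volume : Measure Ω))
    (hfin : Δ 0 < ⊤) (hfinb : Δb 0 < ⊤) (hlt : Δb 0 < Δ 0) :
    -1 < sInf {s : ℝ | -1 < s ∧ 1 < Nab s / Δb s}
      ∧ sInf {s : ℝ | -1 < s ∧ 1 < Nab s / Δb s} ≤ 0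
      ∧ 0 < sInf {s : ℝ | -1 < s ∧ 1 < Nabb s / Δ s}
      ∧ sInf {s : ℝ | -1 < s ∧ 1 < Nabb s / Δ s} < 1 := by
  -- ### basic cdf facts
  have cdfX : IsCdfLike (Measure.map X volume) F := by
    refine ⟨Measure.isProbabilityMeasure_map hXm.aemeasurable, fun x => ?_, hFcont⟩
    rw [Measure.map_apply hXm measurableSet_Iic]
    exact hF x
  have hFnn : ∀ x, 0 ≤ F x := cdfX.nonneg
  have hFle : ∀ x, F x ≤ 1 := cdfX.le_one
  have hFb1 : ∀ x, Fb x = 1 - F x := by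
    intro x
    have hset : {ω | x < X ω} = {ω | X ω ≤ x}ᶜ := by ext ω; simp [not_le]
    rw [hFb x, hset, measure_compl (show MeasurableSet {ω | X ω ≤ x} from hXm measurableSet_Iic)
      (measure_ne_top _ _),
      measure_univ, ENNReal.toReal_sub_of_le prob_le_one ENNReal.one_ne_top,
      ENNReal.toReal_one, ← hF x]
  have hFbnn : ∀ x, 0 ≤ Fb x := fun x => by rw [hFb x]; exact ENNReal.toReal_nonneg
  have hFble : ∀ x, Fb x ≤ 1 := fun x => by rw [hFb1 x]; linarith [hFnn x]
  have hFbcont : Continuous Fb := by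
    have heq : Fb = fun x => 1 - F x := funext hFb1
    rw [heq]; exact continuous_const.sub hFcont
  have habsX : ∫⁻ ω, ENNReal.ofReal |X ω| ∂(volume : Measure Ω) ≠ ⊤ := by
    have h2 := hXint.abs.2
    rw [hasFiniteIntegral_iff_ofReal (Eventually.of_forall fun ω => abs_nonneg (X ω))] at h2
    exact h2.ne
  have mbX : MbarData (Measure.map X volume) F mbar := by
    refine ⟨cdfX, ?_, hmbar⟩
    rw [lintegral_map (by fun_prop) hXm]
    exact habsX
  -- ### mirror side
  have hnoatom : ∀ c : ℝ, (volume : Measure Ω) {ω | X ω = c} = 0 := by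
    intro c
    have hsub : {ω | X ω = c} ⊆ X ⁻¹' {t | F t = F c} := by
      intro ω hω
      simp only [mem_setOf_eq] at hω
      simp only [mem_preimage, mem_setOf_eq, hω]
    have h0 : (Measure.map X volume) {t | F t = F c} = 0 := cdfX.level (F c)
    rw [Measure.map_apply hXm (show MeasurableSet {t | F t = F c} from
      hFcont.measurable (measurableSet_singleton (F c)))] at h0
    exact measure_mono_null hsub h0
  have hYm : Measurable (fun ω => -X ω) := hXm.neg
  have hGF : ∀ x, Fb (-x) = ((Measure.map (fun ω => -X ω) volume) (Iic x)).toReal := by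
    intro x
    rw [Measure.map_apply hYm measurableSet_Iic]
    have hset : (fun ω => -X ω) ⁻¹' Iic x = {ω | -x < X ω} ∪ {ω | X ω = -x} := by
      ext ω
      simp only [mem_preimage, mem_Iic, neg_le, mem_union, mem_setOf_eq]
      constructor
      · intro hle
        rcases eq_or_lt_of_le hle with he | hlt
        · exact Or.inr he.symm
        · exact Or.inl hlt
      · rintro (hlt | he)
        · exact hlt.le
        · exact he.ge
    have hle := measure_union_le (μ := (volume : Measure Ω)) {ω | -x < X ω} {ω | X ω = -x}
    rw [hnoatom (-x), add_zero] at hle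
    have hge : volume {ω | -x < X ω} ≤ volume ({ω | -x < X ω} ∪ {ω | X ω = -x}) :=
      measure_mono subset_union_left
    rw [hset, le_antisymm hle hge]
    exact hFb (-x)
  have cdfY : IsCdfLike (Measure.map (fun ω => -X ω) volume) (fun x => Fb (-x)) :=
    ⟨Measure.isProbabilityMeasure_map hYm.aemeasurable, hGF, hFbcont.comp continuous_neg⟩
  have mbY : MbarData (Measure.map (fun ω => -X ω) volume) (fun x => Fb (-x))
      (fun t => mrl (-t)) := by
    refine ⟨cdfY, ?_, fun t => ?_⟩
    · rw [lintegral_map (by fun_prop) hYm]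
      simpa only [abs_neg] using habsX
    · rw [hmrl (-t), ← integral_comp_neg_Iic t Fb]
  have lneg : ∀ (g : ℝ → ℝ≥0∞), Measurable g → ∫⁻ x : ℝ, g (-x) = ∫⁻ x : ℝ, g x :=
    fun g hg => (Measure.measurePreserving_neg (volume : Measure ℝ)).lintegral_comp hg
  -- ### the two core identities
  have N0 : Nab 0 = Δ 0 := by
    have hmeas : Measurable fun t : ℝ =>
        ENNReal.ofReal ((1 - (1 - F t) ^ ((0:ℝ) + 1)) / F t * mbar t) := by
      have hr : Measurable fun v : ℝ => (1 - (1 - v) ^ ((0:ℝ) + 1)) / v := by fun_prop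
      exact ENNReal.measurable_ofReal.comp ((hr.comp hFcont.measurable).mul mbX.mbar_meas)
    rw [hNab 0, hΔ 0, ← mbX.h1eq, lintegral_map hmeas hXm]
  have N0b : Nabb 0 = Δb 0 := by
    have hmeas : Measurable fun t : ℝ =>
        ENNReal.ofReal ((1 - (1 - Fb (-t)) ^ ((0:ℝ) + 1)) / Fb (-t) * mrl (-t)) := by
      have hr : Measurable fun v : ℝ => (1 - (1 - v) ^ ((0:ℝ) + 1)) / v := by fun_prop
      have hmrlm : Measurable (fun t : ℝ => mrl (-t)) := mbY.mbar_meas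
      exact ENNReal.measurable_ofReal.comp
        ((hr.comp (hFbcont.measurable.comp measurable_neg)).mul hmrlm)
    have h1 := mbY.h1eq
    rw [lintegral_map hmeas hYm] at h1
    simp only [neg_neg] at h1
    have hgm : Measurable fun x : ℝ => ENNReal.ofReal (tsallisFn 0 (Fb x)) :=
      ENNReal.measurable_ofReal.comp ((sk_meas_tsallis 0).comp hFbcont.measurable)
    rw [hNabb 0, h1, hΔb 0]
    exact lneg (fun x => ENNReal.ofReal (tsallisFn 0 (Fb x))) hgm
  have N1b : Nabb 1 = ∫⁻ x : ℝ, ENNReal.ofReal (Fb x * (Fb x - 1 - 2 * Real.log (Fb x))) := by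
    have hmeas : Measurable fun t : ℝ =>
        ENNReal.ofReal ((1 - (1 - Fb (-t)) ^ ((1:ℝ) + 1)) / Fb (-t) * mrl (-t)) := by
      have hr : Measurable fun v : ℝ => (1 - (1 - v) ^ ((1:ℝ) + 1)) / v := by fun_prop
      have hmrlm : Measurable (fun t : ℝ => mrl (-t)) := mbY.mbar_meas
      exact ENNReal.measurable_ofReal.comp
        ((hr.comp (hFbcont.measurable.comp measurable_neg)).mul hmrlm)
    have h1 := mbY.h2eq
    rw [lintegral_map hmeas hYm] at h1
    simp only [neg_neg] at h1
    rw [hNabb 1, h1]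
    have hvm : Measurable fun v : ℝ => v * (v - 1 - 2 * Real.log v) :=
      measurable_id.mul ((measurable_id.sub measurable_const).sub
        (measurable_const.mul Real.measurable_log))
    have hgm : Measurable fun x : ℝ => ENNReal.ofReal (Fb x * (Fb x - 1 - 2 * Real.log (Fb x))) :=
      ENNReal.measurable_ofReal.comp (hvm.comp hFbcont.measurable)
    exact lneg (fun x => ENNReal.ofReal (Fb x * (Fb x - 1 - 2 * Real.log (Fb x)))) hgm
  have hmono_k : ∀ {s s' : ℝ}, -1 < s → s ≤ s' → Nab s ≤ Nab s' := by
    intro s s' hs hss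
    rw [hNab s, hNab s']
    refine lintegral_mono fun ω => ENNReal.ofReal_le_ofReal ?_
    exact mul_le_mul_of_nonneg_right
      (sk_k_mono (hFnn _) (hFle _) hs hss) (mbX.mbar_nonneg _)
  have hmrl_nonneg : ∀ t, 0 ≤ mrl t := by
    intro t
    rw [hmrl t]
    split
    · exact div_nonneg (setIntegral_nonneg measurableSet_Ioi fun x _ => hFbnn x) (le_of_lt ‹_›)
    · exact le_refl 0
  have hmono_kb : ∀ {s s' : ℝ}, -1 < s → s ≤ s' → Nabb s ≤ Nabb s' := by
    intro s s' hs hss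
    rw [hNabb s, hNabb s']
    refine lintegral_mono fun ω => ENNReal.ofReal_le_ofReal ?_
    exact mul_le_mul_of_nonneg_right
      (sk_k_mono (hFbnn _) (hFble _) hs hss) (hmrl_nonneg _)
  have hanti : ∀ {s s' : ℝ}, s ≤ s' → Δ s' ≤ Δ s := by
    intro s s' hss
    rw [hΔ s, hΔ s']
    exact lintegral_mono fun x =>
      ENNReal.ofReal_le_ofReal (sk_tsallisFn_anti (hFnn x) (hFle x) hss)
  have hantib : ∀ {s s' : ℝ}, s ≤ s' → Δb s' ≤ Δb s := by
    intro s s' hss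
    rw [hΔb s, hΔb s']
    exact lintegral_mono fun x =>
      ENNReal.ofReal_le_ofReal (sk_tsallisFn_anti (hFbnn x) (hFble x) hss)
  -- ### measurability of the Ω-integrands
  have hNabMeas : ∀ s : ℝ, Measurable fun ω : Ω =>
      ENNReal.ofReal ((1 - (1 - F (X ω)) ^ (s + 1)) / F (X ω) * mbar (X ω)) := by
    intro s
    have hr : Measurable fun v : ℝ => (1 - (1 - v) ^ (s + 1)) / v := by fun_prop
    exact ENNReal.measurable_ofReal.comp
      ((hr.comp (hFcont.measurable.comp hXm)).mul (mbX.mbar_meas.comp hXm))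
  have hmrl_meas : Measurable mrl := by
    have h1 : Measurable (fun t : ℝ => mrl (-t)) := mbY.mbar_meas
    have h2 : mrl = fun t => mrl (- -t) := by funext t; rw [neg_neg]
    rw [h2]
    exact h1.comp measurable_neg
  have hNabbMeas : ∀ s : ℝ, Measurable fun ω : Ω =>
      ENNReal.ofReal ((1 - (1 - Fb (X ω)) ^ (s + 1)) / Fb (X ω) * mrl (X ω)) := by
    intro s
    have hr : Measurable fun v : ℝ => (1 - (1 - v) ^ (s + 1)) / v := by fun_prop
    exact ENNReal.measurable_ofReal.comp
      ((hr.comp (hFbcont.measurable.comp hXm)).mul (hmrl_meas.comp hXm))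
  -- ### finiteness of Nabb 1
  have hNabb1_fin : Nabb 1 ≠ ⊤ := by
    have hb : Nabb 1 ≤ ENNReal.ofReal 2 * Nabb 0 := by
      rw [hNabb 1, hNabb 0, ← lintegral_const_mul _ (hNabbMeas 0)]
      refine lintegral_mono fun ω => ?_
      rw [← ENNReal.ofReal_mul (by norm_num : (0:ℝ) ≤ 2)]
      refine ENNReal.ofReal_le_ofReal ?_
      rw [show (2:ℝ) * ((1 - (1 - Fb (X ω)) ^ ((0:ℝ) + 1)) / Fb (X ω) * mrl (X ω))
          = (2 * ((1 - (1 - Fb (X ω)) ^ ((0:ℝ) + 1)) / Fb (X ω))) * mrl (X ω) by ring]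
      exact mul_le_mul_of_nonneg_right (sk_k_one_le (hFbnn _) (hFble _)) (hmrl_nonneg _)
    refine ne_top_of_le_ne_top ?_ hb
    rw [N0b]
    exact (ENNReal.mul_lt_top ENNReal.ofReal_lt_top hfinb).ne
  -- ### sequences
  have useq : Tendsto (fun n : ℕ => -1 + ((n:ℝ)+2)⁻¹) atTop (𝓝 (-1)) := by
    have h := (tendsto_const_nhds (x := (-1:ℝ))).add sk_seq_tendsto
    simpa using h
  have useq1 : Tendsto (fun n : ℕ => 1 - ((n:ℝ)+2)⁻¹) atTop (𝓝 1) := by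
    have h := (tendsto_const_nhds (x := (1:ℝ))).sub sk_seq_tendsto
    simpa using h
  -- ### dominated convergence facts
  have dct1 : Tendsto (fun n : ℕ => Nab (-1 + ((n:ℝ)+2)⁻¹)) atTop (𝓝 0) := by
    have hae1 : ∀ᵐ ω : Ω, ¬ F (X ω) = 1 := by
      refine measure_eq_zero_iff_ae_notMem.1 ?_
      have h0 : (Measure.map X volume) {t | F t = 1} = 0 := cdfX.level 1
      rw [Measure.map_apply hXm (show MeasurableSet {t | F t = 1} from
        hFcont.measurable (measurableSet_singleton 1))] at h0
      exact h0
    have hdct := tendsto_lintegral_of_dominated_convergence (μ := (volume : Measure Ω))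
      (F := fun n ω => ENNReal.ofReal
        ((1 - (1 - F (X ω)) ^ ((-1 + ((n:ℝ)+2)⁻¹) + 1)) / F (X ω) * mbar (X ω)))
      (f := fun _ => 0)
      (bound := fun ω => ENNReal.ofReal ((1 - (1 - F (X ω)) ^ ((0:ℝ) + 1)) / F (X ω) * mbar (X ω)))
      (fun n => hNabMeas _)
      (fun n => Eventually.of_forall fun ω => ENNReal.ofReal_le_ofReal
        (mul_le_mul_of_nonneg_right
          (sk_k_mono (hFnn _) (hFle _) (by linarith [sk_seq_pos n])
            (by linarith [sk_seq_le_half n]))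
          (mbX.mbar_nonneg _)))
      (by rw [← hNab 0, N0]; exact hfin.ne)
      (by
        filter_upwards [hae1] with ω hω
        have hvlt : F (X ω) < 1 := lt_of_le_of_ne (hFle _) hω
        have hk := (sk_tendsto_k_neg_one hvlt useq).mul_const (mbar (X ω))
        rw [zero_mul] at hk
        have h3 := (ENNReal.continuous_ofReal.tendsto 0).comp hk
        rw [ENNReal.ofReal_zero] at h3
        exact h3)
    have h4 := hdct.congr fun n => (hNab _).symm
    rwa [lintegral_zero] at h4
  have dct2 : Tendsto (fun n : ℕ => Δ (((n:ℝ)+2)⁻¹)) atTop (𝓝 (Δ 0)) := by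
    have hΔMeas : ∀ s : ℝ, Measurable fun x : ℝ => ENNReal.ofReal (tsallisFn s (F x)) :=
      fun s => ENNReal.measurable_ofReal.comp ((sk_meas_tsallis s).comp hFcont.measurable)
    have hdct := tendsto_lintegral_of_dominated_convergence (μ := (volume : Measure ℝ))
      (F := fun n x => ENNReal.ofReal (tsallisFn (((n:ℝ)+2)⁻¹) (F x)))
      (f := fun x => ENNReal.ofReal (tsallisFn 0 (F x)))
      (bound := fun x => ENNReal.ofReal (tsallisFn 0 (F x)))
      (fun n => hΔMeas _)
      (fun n => Eventually.of_forall fun x => ENNReal.ofReal_le_ofReal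
        (sk_tsallisFn_anti (hFnn x) (hFle x) (le_of_lt (sk_seq_pos n))))
      (by rw [← hΔ 0]; exact hfin.ne)
      (Eventually.of_forall fun x => (ENNReal.continuous_ofReal.tendsto _).comp
        (sk_tendsto_tsallisFn_zero (hFnn x) sk_seq_tendsto (fun n => (sk_seq_pos n).ne')))
    have h4 := hdct.congr fun n => (hΔ _).symm
    rwa [← hΔ 0] at h4
  have dct3 : Tendsto (fun n : ℕ => Nabb (((n:ℝ)+2)⁻¹)) atTop (𝓝 (Nabb 0)) := by
    have hdct := tendsto_lintegral_of_dominated_convergence (μ := (volume : Measure Ω))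
      (F := fun n ω => ENNReal.ofReal
        ((1 - (1 - Fb (X ω)) ^ ((((n:ℝ)+2)⁻¹) + 1)) / Fb (X ω) * mrl (X ω)))
      (f := fun ω => ENNReal.ofReal ((1 - (1 - Fb (X ω)) ^ ((0:ℝ) + 1)) / Fb (X ω) * mrl (X ω)))
      (bound := fun ω => ENNReal.ofReal
        ((1 - (1 - Fb (X ω)) ^ ((1:ℝ) + 1)) / Fb (X ω) * mrl (X ω)))
      (fun n => hNabbMeas _)
      (fun n => Eventually.of_forall fun ω => ENNReal.ofReal_le_ofReal
        (mul_le_mul_of_nonneg_right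
          (sk_k_mono (hFbnn _) (hFble _) (by linarith [sk_seq_pos n])
            (by linarith [sk_seq_le_half n]))
          (hmrl_nonneg _)))
      (by rw [← hNabb 1]; exact hNabb1_fin)
      (Eventually.of_forall fun ω => by
        have hk := (sk_tendsto_k (hFble (X ω)) (by norm_num : (0:ℝ) < 0 + 1)
          sk_seq_tendsto).mul_const (mrl (X ω))
        exact (ENNReal.continuous_ofReal.tendsto _).comp hk)
    have h4 := hdct.congr fun n => (hNabb _).symm
    rwa [← hNabb 0] at h4
  have dct4 : Tendsto (fun n : ℕ => Δ (1 - ((n:ℝ)+2)⁻¹)) atTop (𝓝 (Δ 1)) := by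
    have hΔMeas : ∀ s : ℝ, Measurable fun x : ℝ => ENNReal.ofReal (tsallisFn s (F x)) :=
      fun s => ENNReal.measurable_ofReal.comp ((sk_meas_tsallis s).comp hFcont.measurable)
    have hdct := tendsto_lintegral_of_dominated_convergence (μ := (volume : Measure ℝ))
      (F := fun n x => ENNReal.ofReal (tsallisFn (1 - ((n:ℝ)+2)⁻¹) (F x)))
      (f := fun x => ENNReal.ofReal (tsallisFn 1 (F x)))
      (bound := fun x => ENNReal.ofReal (tsallisFn 0 (F x)))
      (fun n => hΔMeas _)
      (fun n => Eventually.of_forall fun x => ENNReal.ofReal_le_ofReal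
        (sk_tsallisFn_anti (hFnn x) (hFle x) (by linarith [sk_seq_le_half n])))
      (by rw [← hΔ 0]; exact hfin.ne)
      (Eventually.of_forall fun x => (ENNReal.continuous_ofReal.tendsto _).comp
        (sk_tendsto_tsallisFn_ne (hFnn x) one_ne_zero useq1
          (fun n => by have := sk_seq_le_half n; intro hc; rw [sub_eq_zero] at hc; linarith)))
    have h4 := hdct.congr fun n => (hΔ _).symm
    rwa [← hΔ 1] at h4
  have dct5 : Tendsto (fun n : ℕ => Nabb (1 - ((n:ℝ)+2)⁻¹)) atTop (𝓝 (Nabb 1)) := by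
    have hdct := tendsto_lintegral_of_dominated_convergence (μ := (volume : Measure Ω))
      (F := fun n ω => ENNReal.ofReal
        ((1 - (1 - Fb (X ω)) ^ ((1 - ((n:ℝ)+2)⁻¹) + 1)) / Fb (X ω) * mrl (X ω)))
      (f := fun ω => ENNReal.ofReal ((1 - (1 - Fb (X ω)) ^ ((1:ℝ) + 1)) / Fb (X ω) * mrl (X ω)))
      (bound := fun ω => ENNReal.ofReal
        ((1 - (1 - Fb (X ω)) ^ ((1:ℝ) + 1)) / Fb (X ω) * mrl (X ω)))
      (fun n => hNabbMeas _)
      (fun n => Eventually.of_forall fun ω => ENNReal.ofReal_le_ofReal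
        (mul_le_mul_of_nonneg_right
          (sk_k_mono (hFbnn _) (hFble _) (by linarith [sk_seq_le_half n])
            (by linarith [sk_seq_pos n]))
          (hmrl_nonneg _)))
      (by rw [← hNabb 1]; exact hNabb1_fin)
      (Eventually.of_forall fun ω => by
        have hk := (sk_tendsto_k (hFble (X ω)) (by norm_num : (0:ℝ) < 1 + 1)
          useq1).mul_const (mrl (X ω))
        exact (ENNReal.continuous_ofReal.tendsto _).comp hk)
    have h4 := hdct.congr fun n => (hNabb _).symm
    rwa [← hNabb 1] at h4
  -- ### band and positivity
  obtain ⟨c, d, hcd, hband⟩ := cdfX.band (show (0:ℝ) < 3/4 by norm_num)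
    (show (3:ℝ)/4 < 7/8 by norm_num) (show (7:ℝ)/8 < 1 by norm_num)
  have hbandb : ∀ x ∈ Ioo c d, 1/8 < Fb x ∧ Fb x < 1/4 := by
    intro x hx
    obtain ⟨h1, h2⟩ := hband x hx
    rw [hFb1 x]
    constructor <;> linarith
  have hlogband : ∀ x ∈ Ioo c d, Real.log (Fb x) < -(1.3862943606) := by
    intro x hx
    obtain ⟨h1, h2⟩ := hbandb x hx
    have hlt4 : Real.log (Fb x) < Real.log (1/4) := Real.log_lt_log (by linarith) h2
    have h4 : Real.log (1/4) = -(2 * Real.log 2) := by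
      rw [one_div, Real.log_inv, show (4:ℝ) = 2^2 by norm_num, Real.log_pow]
      push_cast; ring
    rw [h4] at hlt4
    have hl2 := Real.log_two_gt_d9
    linarith
  have hΔb0pos : 0 < Δb 0 := by
    rw [hΔb 0]
    have hle : ∀ x : ℝ, (Ioo c d).indicator (fun _ => ENNReal.ofReal (1/8)) x
        ≤ ENNReal.ofReal (tsallisFn 0 (Fb x)) := by
      intro x
      by_cases hx : x ∈ Ioo c d
      · rw [indicator_of_mem hx]
        refine ENNReal.ofReal_le_ofReal ?_
        obtain ⟨h1, h2⟩ := hbandb x hx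
        have hlog := hlogband x hx
        rw [tsallisFn, if_pos rfl]
        nlinarith
      · rw [indicator_of_notMem hx]
        exact zero_le
    calc (0:ℝ≥0∞) < ENNReal.ofReal (1/8) * volume (Ioo c d) := by
          refine ENNReal.mul_pos (ENNReal.ofReal_pos.2 (by norm_num)).ne' ?_
          rw [Real.volume_Ioo]
          exact (ENNReal.ofReal_pos.2 (by linarith)).ne'
      _ = ∫⁻ x, (Ioo c d).indicator (fun _ => ENNReal.ofReal (1/8)) x := by
          rw [lintegral_indicator measurableSet_Ioo, setLIntegral_const]
      _ ≤ ∫⁻ x, ENNReal.ofReal (tsallisFn 0 (Fb x)) := lintegral_mono hle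
  -- ### strict inequality at s = 1
  have hDelta1_ne_top : Δ 1 ≠ ⊤ := (lt_of_le_of_lt (hanti (by norm_num : (0:ℝ) ≤ 1)) hfin).ne
  have strict1 : Δ 1 < Nabb 1 := by
    rw [N1b, hΔ 1]
    have hptle : ∀ x : ℝ, ENNReal.ofReal (tsallisFn 1 (F x))
        + (Ioo c d).indicator (fun _ => ENNReal.ofReal (1/8)) x
        ≤ ENNReal.ofReal (Fb x * (Fb x - 1 - 2 * Real.log (Fb x))) := by
      intro x
      have hFx : F x = 1 - Fb x := by rw [hFb1 x]; ring
      have ht1 : tsallisFn 1 (F x) = (1 - Fb x) * Fb x := by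
        rw [tsallisFn, if_neg one_ne_zero, Real.rpow_one, hFx]; ring
      by_cases hx : x ∈ Ioo c d
      · rw [indicator_of_mem hx, ht1,
          ← ENNReal.ofReal_add (by nlinarith [hFbnn x, hFble x]) (by norm_num)]
        refine ENNReal.ofReal_le_ofReal ?_
        obtain ⟨h1, h2⟩ := hbandb x hx
        have hlog := hlogband x hx
        have hw : (0:ℝ) ≤ Fb x - 1/8 := by linarith
        have hw2 : (0:ℝ) ≤ (Fb x - 1 - Real.log (Fb x)) - 0.5112943606 := by linarith
        nlinarith [mul_nonneg hw hw2]
      · rw [indicator_of_notMem hx, add_zero, ht1]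
        refine ENNReal.ofReal_le_ofReal ?_
        rcases eq_or_lt_of_le (hFbnn x) with hv | hv
        · rw [← hv]; norm_num
        · have hlog := Real.log_le_sub_one_of_pos hv
          nlinarith [hFble x]
    have h1 : (∫⁻ x, (ENNReal.ofReal (tsallisFn 1 (F x))
        + (Ioo c d).indicator (fun _ => ENNReal.ofReal (1/8)) x))
        ≤ ∫⁻ x, ENNReal.ofReal (Fb x * (Fb x - 1 - 2 * Real.log (Fb x))) :=
      lintegral_mono hptle
    rw [lintegral_add_right _ (measurable_const.indicator measurableSet_Ioo),
      lintegral_indicator measurableSet_Ioo, setLIntegral_const] at h1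
    refine lt_of_lt_of_le ?_ h1
    refine ENNReal.lt_add_right ?_ ?_
    · rw [← hΔ 1]; exact hDelta1_ne_top
    · refine (ENNReal.mul_pos (ENNReal.ofReal_pos.2 (by norm_num)).ne' ?_).ne'
      rw [Real.volume_Ioo]
      exact (ENNReal.ofReal_pos.2 (by linarith)).ne'
  -- ### conclusion ρ ≤ 0
  have hSρ_mem0 : (0:ℝ) ∈ {s : ℝ | -1 < s ∧ 1 < Nab s / Δb s} := by
    refine ⟨by norm_num, ?_⟩
    rw [N0]
    exact sk_one_lt_div hlt hfinb.ne
  have hbddρ : BddBelow {s : ℝ | -1 < s ∧ 1 < Nab s / Δb s} := ⟨-1, fun s hs => hs.1.le⟩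
  have hρle : sInf {s : ℝ | -1 < s ∧ 1 < Nab s / Δb s} ≤ 0 := csInf_le hbddρ hSρ_mem0
  -- ### conclusion -1 < ρ
  have hρgt : -1 < sInf {s : ℝ | -1 < s ∧ 1 < Nab s / Δb s} := by
    obtain ⟨n0, hn0⟩ := (dct1.eventually_lt_const hΔb0pos).exists
    have hs₀gt : (-1:ℝ) < -1 + ((n0:ℝ)+2)⁻¹ := by linarith [sk_seq_pos n0]
    have hs₀lt0 : -1 + ((n0:ℝ)+2)⁻¹ < 0 := by linarith [sk_seq_le_half n0]
    have hlb : ∀ s ∈ {s : ℝ | -1 < s ∧ 1 < Nab s / Δb s}, -1 + ((n0:ℝ)+2)⁻¹ ≤ s := by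
      intro s hs
      by_contra hcon
      push_neg at hcon
      have h1 : Nab s ≤ Nab (-1 + ((n0:ℝ)+2)⁻¹) := hmono_k hs.1 hcon.le
      have h2 : Δb 0 ≤ Δb s := hantib (by linarith)
      have h3 : Nab s < Δb s := lt_of_le_of_lt h1 (lt_of_lt_of_le hn0 h2)
      exact absurd (sk_lt_of_one_lt_div hs.2) (not_lt.2 h3.le)
    exact lt_of_lt_of_le hs₀gt (le_csInf ⟨0, hSρ_mem0⟩ hlb)
  -- ### conclusion ρb < 1
  obtain ⟨n1, hn1⟩ := (dct4.eventually_lt dct5 strict1).exists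
  have hs₁pos : 0 < 1 - ((n1:ℝ)+2)⁻¹ := by linarith [sk_seq_le_half n1]
  have hs₁lt1 : 1 - ((n1:ℝ)+2)⁻¹ < 1 := by linarith [sk_seq_pos n1]
  have hΔs₁ne : Δ (1 - ((n1:ℝ)+2)⁻¹) ≠ ⊤ := (lt_of_le_of_lt (hanti hs₁pos.le) hfin).ne
  have hs₁mem : (1 - ((n1:ℝ)+2)⁻¹) ∈ {s : ℝ | -1 < s ∧ 1 < Nabb s / Δ s} :=
    ⟨by linarith, sk_one_lt_div hn1 hΔs₁ne⟩
  have hbddρb : BddBelow {s : ℝ | -1 < s ∧ 1 < Nabb s / Δ s} := ⟨-1, fun s hs => hs.1.le⟩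
  have hρblt : sInf {s : ℝ | -1 < s ∧ 1 < Nabb s / Δ s} < 1 :=
    lt_of_le_of_lt (csInf_le hbddρb hs₁mem) hs₁lt1
  -- ### conclusion 0 < ρb
  have hρbpos : 0 < sInf {s : ℝ | -1 < s ∧ 1 < Nabb s / Δ s} := by
    by_contra hc
    push_neg at hc
    have key : ∀ n : ℕ, Δ (((n:ℝ)+2)⁻¹) ≤ Nabb (((n:ℝ)+2)⁻¹) := by
      intro n
      obtain ⟨s, hs, hslt⟩ := exists_lt_of_csInf_lt ⟨_, hs₁mem⟩
        (lt_of_le_of_lt hc (sk_seq_pos n))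
      have hΔsNabb : Δ s < Nabb s := sk_lt_of_one_lt_div hs.2
      have hspos : 0 < s := by
        by_contra hsc
        push_neg at hsc
        have h1 : Nabb s ≤ Δb 0 := le_of_le_of_eq (hmono_kb hs.1 hsc) N0b
        have h2 : Δ 0 ≤ Δ s := hanti hsc
        exact absurd (lt_of_le_of_lt h2 (lt_of_lt_of_le hΔsNabb h1)) (not_lt.2 hlt.le)
      calc Δ (((n:ℝ)+2)⁻¹) ≤ Δ s := hanti hslt.le
        _ ≤ Nabb s := hΔsNabb.le
        _ ≤ Nabb (((n:ℝ)+2)⁻¹) := hmono_kb (by linarith) hslt.le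
    have hlim := le_of_tendsto_of_tendsto' dct2 dct3 key
    rw [N0b] at hlim
    exact absurd (lt_of_lt_of_le hlt hlim) (lt_irrefl _)
  exact ⟨hρgt, hρle, hρbpos, hρblt⟩

/-- For an integrable real random variable `X` with continuous cdf and
finite `Δ_0(X)`, `Δ̄_0(X)`, the skewness parameters
`ϱ(X) = inf{s > −1 : ∇_s(X)/Δ̄_s(X) > 1}` and `ϱ̄(X) = inf{s > −1 : ∇̄_s(X)/Δ_s(X) > 1}`
satisfy: if `Δ_0(X) > Δ̄_0(X)` then `−1 < ϱ(X) ≤ 0 < ϱ̄(X) < 1`, and if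
`Δ_0(X) < Δ̄_0(X)` then `−1 < ϱ̄(X) ≤ 0 < ϱ(X) < 1`. -/
theorem skewness_parameters_range
    {Ω : Type*} [MeasureSpace Ω] [IsProbabilityMeasure (volume : Measure Ω)]
    (X : Ω → ℝ) (hXm : Measurable X) (hXint : Integrable X)
    (F Fb : ℝ → ℝ)
    (hF : ∀ x, F x = ((volume : Measure Ω) {ω | X ω ≤ x}).toReal)
    (hFb : ∀ x, Fb x = ((volume : Measure Ω) {ω | x < X ω}).toReal)
    (hFcont : Continuous F)
    (mbar mrl : ℝ → ℝ)
    (hmbar : ∀ t, mbar t = if 0 < F t then (∫ x in Iic t, F x) / F t else 0)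
    (hmrl : ∀ t, mrl t = if 0 < Fb t then (∫ x in Ioi t, Fb x) / Fb t else 0)
    (Δ Δb Nab Nabb : ℝ → ℝ≥0∞)
    (hΔ : ∀ s : ℝ, Δ s = ∫⁻ x : ℝ, ENNReal.ofReal (tsallisFn s (F x)))
    (hΔb : ∀ s : ℝ, Δb s = ∫⁻ x : ℝ, ENNReal.ofReal (tsallisFn s (Fb x)))
    (hNab : ∀ s : ℝ, Nab s = ∫⁻ ω, ENNReal.ofReal
        (((1 - (1 - F (X ω)) ^ (s + 1)) / F (X ω)) * mbar (X ω)) ∂(volume : Measure Ω))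
    (hNabb : ∀ s : ℝ, Nabb s = ∫⁻ ω, ENNReal.ofReal
        (((1 - (1 - Fb (X ω)) ^ (s + 1)) / Fb (X ω)) * mrl (X ω)) ∂(volume : Measure Ω))
    (hfin : Δ 0 < ⊤) (hfinb : Δb 0 < ⊤)
    (ρ ρb : ℝ)
    (hρ : ρ = sInf {s : ℝ | -1 < s ∧ 1 < Nab s / Δb s})
    (hρb : ρb = sInf {s : ℝ | -1 < s ∧ 1 < Nabb s / Δ s}) :
    (Δb 0 < Δ 0 → -1 < ρ ∧ ρ ≤ 0 ∧ 0 < ρb ∧ ρb < 1)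
    ∧ (Δ 0 < Δb 0 → -1 < ρb ∧ ρb ≤ 0 ∧ 0 < ρ ∧ ρ < 1) := by
  subst hρ hρb
  constructor
  · intro hlt
    exact sk_master X hXm hXint F Fb hF hFb hFcont mbar mrl hmbar hmrl
      Δ Δb Nab Nabb hΔ hΔb hNab hNabb hfin hfinb hlt
  · intro hlt
    -- mirror everything through x ↦ -x
    have cdfX : IsCdfLike (Measure.map X volume) F := by
      refine ⟨Measure.isProbabilityMeasure_map hXm.aemeasurable, fun x => ?_, hFcont⟩
      rw [Measure.map_apply hXm measurableSet_Iic]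
      exact hF x
    have hFnn : ∀ x, 0 ≤ F x := cdfX.nonneg
    have hFb1 : ∀ x, Fb x = 1 - F x := by
      intro x
      have hset : {ω | x < X ω} = {ω | X ω ≤ x}ᶜ := by ext ω; simp [not_le]
      rw [hFb x, hset,
        measure_compl (show MeasurableSet {ω | X ω ≤ x} from hXm measurableSet_Iic)
          (measure_ne_top _ _),
        measure_univ, ENNReal.toReal_sub_of_le prob_le_one ENNReal.one_ne_top,
        ENNReal.toReal_one, ← hF x]
    have hFbcont : Continuous Fb := by
      have heq : Fb = fun x => 1 - F x := funext hFb1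
      rw [heq]; exact continuous_const.sub hFcont
    have hnoatom : ∀ c : ℝ, (volume : Measure Ω) {ω | X ω = c} = 0 := by
      intro c
      have hsub : {ω | X ω = c} ⊆ X ⁻¹' {t | F t = F c} := by
        intro ω hω
        simp only [mem_setOf_eq] at hω
        simp only [mem_preimage, mem_setOf_eq, hω]
      have h0 : (Measure.map X volume) {t | F t = F c} = 0 := cdfX.level (F c)
      rw [Measure.map_apply hXm (show MeasurableSet {t | F t = F c} from
        hFcont.measurable (measurableSet_singleton (F c)))] at h0
      exact measure_mono_null hsub h0
    have hF' : ∀ x, Fb (-x) = ((volume : Measure Ω) {ω | -X ω ≤ x}).toReal := by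
      intro x
      have hset : {ω | -X ω ≤ x} = {ω | -x < X ω} ∪ {ω | X ω = -x} := by
        ext ω
        simp only [mem_setOf_eq, neg_le, mem_union]
        constructor
        · intro hle
          rcases eq_or_lt_of_le hle with he | hlt'
          · exact Or.inr he.symm
          · exact Or.inl hlt'
        · rintro (hlt' | he)
          · exact hlt'.le
          · exact he.ge
      have hle := measure_union_le (μ := (volume : Measure Ω)) {ω | -x < X ω} {ω | X ω = -x}
      rw [hnoatom (-x), add_zero] at hle
      have hge : volume {ω | -x < X ω} ≤ volume ({ω | -x < X ω} ∪ {ω | X ω = -x}) :=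
        measure_mono subset_union_left
      rw [hset, le_antisymm hle hge]
      exact hFb (-x)
    have hFb' : ∀ x, F (-x) = ((volume : Measure Ω) {ω | x < -X ω}).toReal := by
      intro x
      have hset : {ω | x < -X ω} = {ω | X ω ≤ -x} \ {ω | X ω = -x} := by
        ext ω
        simp only [mem_setOf_eq, mem_diff, lt_neg]
        constructor
        · intro hlt'
          exact ⟨hlt'.le, fun hc => absurd hc (ne_of_lt hlt')⟩
        · rintro ⟨hle, hne⟩
          exact lt_of_le_of_ne hle hne
      rw [hset, measure_diff_null (hnoatom (-x))]
      exact hF (-x)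
    have lneg : ∀ (g : ℝ → ℝ≥0∞), Measurable g → ∫⁻ x : ℝ, g (-x) = ∫⁻ x : ℝ, g x :=
      fun g hg => (Measure.measurePreserving_neg (volume : Measure ℝ)).lintegral_comp hg
    have hΔ' : ∀ s : ℝ, Δb s = ∫⁻ x : ℝ, ENNReal.ofReal (tsallisFn s (Fb (-x))) := by
      intro s
      rw [hΔb s]
      exact (lneg (fun x => ENNReal.ofReal (tsallisFn s (Fb x)))
        (ENNReal.measurable_ofReal.comp ((sk_meas_tsallis s).comp hFbcont.measurable))).symm
    have hΔb' : ∀ s : ℝ, Δ s = ∫⁻ x : ℝ, ENNReal.ofReal (tsallisFn s (F (-x))) := by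
      intro s
      rw [hΔ s]
      exact (lneg (fun x => ENNReal.ofReal (tsallisFn s (F x)))
        (ENNReal.measurable_ofReal.comp ((sk_meas_tsallis s).comp hFcont.measurable))).symm
    have hNab' : ∀ s : ℝ, Nabb s = ∫⁻ ω, ENNReal.ofReal
        (((1 - (1 - Fb (- -X ω)) ^ (s + 1)) / Fb (- -X ω)) * mrl (- -X ω))
          ∂(volume : Measure Ω) := by
      intro s
      simp only [neg_neg]
      exact hNabb s
    have hNabb' : ∀ s : ℝ, Nab s = ∫⁻ ω, ENNReal.ofReal
        (((1 - (1 - F (- -X ω)) ^ (s + 1)) / F (- -X ω)) * mbar (- -X ω))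
          ∂(volume : Measure Ω) := by
      intro s
      simp only [neg_neg]
      exact hNab s
    have hmbar' : ∀ t, mrl (-t) = if 0 < Fb (-t) then (∫ x in Iic t, Fb (-x)) / Fb (-t) else 0 :=
      fun t => by rw [hmrl (-t), ← integral_comp_neg_Iic t Fb]
    have hmrl' : ∀ t, mbar (-t) = if 0 < F (-t) then (∫ x in Ioi t, F (-x)) / F (-t) else 0 :=
      fun t => by rw [hmbar (-t), ← integral_comp_neg_Ioi t F]
    exact sk_master (fun ω => -X ω) hXm.neg hXint.neg
      (fun x => Fb (-x)) (fun x => F (-x)) hF' hFb' (hFbcont.comp continuous_neg)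
      (fun t => mrl (-t)) (fun t => mbar (-t)) hmbar' hmrl'
      Δb Δ Nabb Nab hΔ' hΔb' hNab' hNabb' hfinb hfin hlt
end

section
/- Let X be a square-integrable real random variable with continuous cumulative distribution function and Var X = 1. Then the cumulative residual entropy satisfies Δ̄_0(X) = −∫_ℝ F̄_X(x) log F̄_X(x) dx ≤ 1, with equality if and only if X − E[X] + 1 has the standard exponential distribution (density e^{−x} on (0,∞)). In other words, up to translation the standard exponential random variable is the unique maximizer of the cumulative residual entropy among unit-variance random variables. -/
open MeasureTheory Set

/-- The variance of a probability measure `μ` on `ℝ`. -/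
noncomputable def mVar (μ : Measure ℝ) : ℝ :=
  ∫ x, (x - ∫ y, y ∂μ) ^ 2 ∂μ

/-- The standard exponential distribution, with density `e^{−x}` on `(0,∞)`. -/
noncomputable def stdExp : Measure ℝ :=
  (volume : Measure ℝ).withDensity fun x => ENNReal.ofReal (if 0 < x then Real.exp (-x) else 0)

open Real
open scoped ENNReal

variable {μ : Measure ℝ} [IsProbabilityMeasure μ]

lemma swap_Ioi (μ : Measure ℝ) [IsProbabilityMeasure μ] (g : ℝ → ℝ≥0∞) (hg : Measurable g) :
    ∫⁻ x, g x * μ (Ioi x) = ∫⁻ y, ∫⁻ x in Iio y, g x ∂(volume : Measure ℝ) ∂μ := by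
  have h1 : ∀ x : ℝ, g x * μ (Ioi x) = ∫⁻ y, g x * (Ioi x).indicator 1 y ∂μ := by
    intro x
    rw [lintegral_const_mul _ (measurable_one.indicator measurableSet_Ioi),
      lintegral_indicator_one measurableSet_Ioi]
  have h2 : ∀ y : ℝ, (∫⁻ x in Iio y, g x ∂(volume : Measure ℝ))
      = ∫⁻ x, g x * (Ioi x).indicator 1 y ∂(volume : Measure ℝ) := by
    intro y
    rw [← lintegral_indicator measurableSet_Iio]
    congr 1
    funext x
    by_cases h : x < y <;> simp [Set.indicator, h, lt_iff_lt_of_le_iff_le]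
  simp_rw [h1, h2]
  rw [lintegral_lintegral_swap]
  apply Measurable.aemeasurable
  have : (Function.uncurry fun x y => g x * (Ioi x).indicator 1 y)
      = fun p : ℝ × ℝ => g p.1 * ({q : ℝ × ℝ | q.1 < q.2}.indicator 1 p) := by
    funext p
    by_cases h : p.1 < p.2 <;> simp [Function.uncurry, Set.indicator, h]
  rw [this]
  exact (hg.comp measurable_fst).mul (measurable_one.indicator (measurableSet_lt measurable_fst measurable_snd))

lemma swap_Iic (μ : Measure ℝ) [IsProbabilityMeasure μ] (g : ℝ → ℝ≥0∞) (hg : Measurable g) :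
    ∫⁻ x, g x * μ (Iic x) = ∫⁻ y, ∫⁻ x in Ici y, g x ∂(volume : Measure ℝ) ∂μ := by
  have h1 : ∀ x : ℝ, g x * μ (Iic x) = ∫⁻ y, g x * (Iic x).indicator 1 y ∂μ := by
    intro x
    rw [lintegral_const_mul _ (measurable_one.indicator measurableSet_Iic),
      lintegral_indicator_one measurableSet_Iic]
  have h2 : ∀ y : ℝ, (∫⁻ x in Ici y, g x ∂(volume : Measure ℝ))
      = ∫⁻ x, g x * (Iic x).indicator 1 y ∂(volume : Measure ℝ) := by
    intro y
    rw [← lintegral_indicator measurableSet_Ici]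
    congr 1
    funext x
    by_cases h : y ≤ x <;> simp [Set.indicator, h]
  simp_rw [h1, h2]
  rw [lintegral_lintegral_swap]
  apply Measurable.aemeasurable
  have : (Function.uncurry fun x y => g x * (Iic x).indicator 1 y)
      = fun p : ℝ × ℝ => g p.1 * ({q : ℝ × ℝ | q.2 ≤ q.1}.indicator 1 p) := by
    funext p
    by_cases h : p.2 ≤ p.1 <;> simp [Function.uncurry, Set.indicator, h]
  rw [this]
  exact (hg.comp measurable_fst).mul (measurable_one.indicator (measurableSet_le measurable_snd measurable_fst))

lemma vol_lin (a y : ℝ) :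
    ∫⁻ x in Ioo a y, ENNReal.ofReal (x - a) = ENNReal.ofReal (max (y - a) 0 ^ 2 / 2) := by
  rcases le_or_gt y a with h | h
  · rw [Ioo_eq_empty (by exact fun h' => absurd h (not_le.2 h')), Measure.restrict_empty,
      lintegral_zero_measure]
    rw [max_eq_right (by linarith)]
    norm_num
  · have hint : IntegrableOn (fun x => x - a) (Ioo a y) := by
      have h2 : IntervalIntegrable (fun x => x - a) volume a y := (continuous_id.sub continuous_const).intervalIntegrable a y
      exact h2.1.mono_set Ioo_subset_Ioc_self
    rw [← ofReal_integral_eq_lintegral_ofReal hint]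
    · congr 1
      rw [← integral_Ioc_eq_integral_Ioo, ← intervalIntegral.integral_of_le h.le]
      have := intervalIntegral.integral_comp_sub_right (a := a) (b := y) (fun x => x) a
      rw [this, integral_id]
      rw [max_eq_left (by linarith)]
      ring
    · filter_upwards [ae_restrict_mem measurableSet_Ioo] with x hx
      simp only [Pi.zero_apply]
      linarith [hx.1]

lemma lint_G (μ : Measure ℝ) [IsProbabilityMeasure μ] (a : ℝ) :
    ∫⁻ x in Ioi a, μ (Ioi x) = ∫⁻ y, ENNReal.ofReal (y - a) ∂μ := by
  have hs := swap_Ioi μ ((Ioi a).indicator 1) (measurable_one.indicator measurableSet_Ioi)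
  rw [← lintegral_indicator measurableSet_Ioi]
  have e1 : (fun x => (Ioi a).indicator (fun x => μ (Ioi x)) x)
      = fun x => (Ioi a).indicator 1 x * μ (Ioi x) := by
    funext x; by_cases h : a < x <;> simp [Set.indicator, h]
  rw [e1, hs]
  congr 1
  funext y
  rw [lintegral_indicator measurableSet_Ioi, Measure.restrict_restrict measurableSet_Ioi,
    Ioi_inter_Iio]
  simp only [Pi.one_apply]
  rw [setLIntegral_one, Real.volume_Ioo]

lemma lint_F (μ : Measure ℝ) [IsProbabilityMeasure μ] (a : ℝ) :
    ∫⁻ x in Iio a, μ (Iic x) = ∫⁻ y, ENNReal.ofReal (a - y) ∂μ := by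
  have hs := swap_Iic μ ((Iio a).indicator 1) (measurable_one.indicator measurableSet_Iio)
  rw [← lintegral_indicator measurableSet_Iio]
  have e1 : (fun x => (Iio a).indicator (fun x => μ (Iic x)) x)
      = fun x => (Iio a).indicator 1 x * μ (Iic x) := by
    funext x; by_cases h : x < a <;> simp [Set.indicator, h]
  rw [e1, hs]
  congr 1
  funext y
  rw [lintegral_indicator measurableSet_Iio, Measure.restrict_restrict measurableSet_Iio,
    Iio_inter_Ici]
  simp only [Pi.one_apply]
  rw [setLIntegral_one, Real.volume_Ico]

lemma lint_xG (μ : Measure ℝ) [IsProbabilityMeasure μ] (a : ℝ) :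
    ∫⁻ x in Ioi a, ENNReal.ofReal (x - a) * μ (Ioi x)
      = ∫⁻ y, ENNReal.ofReal (max (y - a) 0 ^ 2 / 2) ∂μ := by
  have hg : Measurable ((Ioi a).indicator (fun x => ENNReal.ofReal (x - a))) :=
    ((measurable_id.sub_const a).ennreal_ofReal).indicator measurableSet_Ioi
  have hs := swap_Ioi μ _ hg
  rw [← lintegral_indicator measurableSet_Ioi]
  have e1 : (fun x => (Ioi a).indicator (fun x => ENNReal.ofReal (x - a) * μ (Ioi x)) x)
      = fun x => (Ioi a).indicator (fun x => ENNReal.ofReal (x - a)) x * μ (Ioi x) := by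
    funext x; by_cases h : a < x <;> simp [Set.indicator, h]
  rw [e1, hs]
  congr 1
  funext y
  rw [lintegral_indicator measurableSet_Ioi, Measure.restrict_restrict measurableSet_Ioi,
    Ioi_inter_Iio, vol_lin]

variable {μ : Measure ℝ} [IsProbabilityMeasure μ]

lemma hGmble (μ : Measure ℝ) : Measurable fun x : ℝ => μ (Ioi x) :=
  Antitone.measurable (fun _ _ hxy => measure_mono (Ioi_subset_Ioi hxy))

lemma hFmble (μ : Measure ℝ) : Measurable fun x : ℝ => μ (Iic x) :=
  Monotone.measurable (fun _ _ hxy => measure_mono (Iic_subset_Iic.2 hxy))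

lemma ofReal_max_eq (t : ℝ) : ENNReal.ofReal (max t 0) = ENNReal.ofReal t := by
  rcases le_total t 0 with h | h
  · rw [max_eq_right h, ENNReal.ofReal_zero, ENNReal.ofReal_eq_zero.2 h]
  · rw [max_eq_left h]

lemma integ_id (hL2 : Integrable (fun x : ℝ => x ^ 2) μ) : Integrable (fun y : ℝ => y) μ := by
  refine ((integrable_const 1).add hL2).mono' measurable_id.aestronglyMeasurable ?_
  filter_upwards with y
  have h1 := sq_nonneg (|y| - 1)
  have h2 := sq_abs y
  simp only [norm_eq_abs, Pi.add_apply]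
  nlinarith

lemma integ_max (hL2 : Integrable (fun x : ℝ => x ^ 2) μ) (a : ℝ) :
    Integrable (fun y : ℝ => max (y - a) 0) μ := by
  refine (((integ_id hL2).abs.add (integrable_const |a|))).mono'
    (((continuous_id.sub continuous_const).max continuous_const).aestronglyMeasurable) ?_
  filter_upwards with y
  simp only [norm_eq_abs, Pi.add_apply]
  rcases le_total (y - a) 0 with h | h
  · rw [max_eq_right h, abs_zero]
    positivity
  · rw [max_eq_left h, abs_of_nonneg h]
    cases abs_cases y <;> cases abs_cases a <;> linarith

lemma integ_sq' (hL2 : Integrable (fun x : ℝ => x ^ 2) μ) (a : ℝ) :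
    Integrable (fun y : ℝ => (y - a) ^ 2) μ := by
  have e : (fun y : ℝ => (y - a) ^ 2) = fun y => y ^ 2 - (2 * a) * y + a ^ 2 := by
    funext y; ring
  rw [e]
  exact (hL2.sub ((integ_id hL2).const_mul (2 * a))).add (integrable_const _)

lemma integ_maxsq (hL2 : Integrable (fun x : ℝ => x ^ 2) μ) (a : ℝ) :
    Integrable (fun y : ℝ => max (y - a) 0 ^ 2) μ := by
  refine (integ_sq' hL2 a).mono'
    ((((continuous_id.sub continuous_const).max continuous_const).pow 2).aestronglyMeasurable) ?_
  filter_upwards with y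
  have hnn : (0:ℝ) ≤ max (y - a) 0 := le_max_right _ _
  rw [norm_eq_abs, abs_of_nonneg (by positivity : (0:ℝ) ≤ max (y - a) 0 ^ 2)]
  rcases le_total (y - a) 0 with h | h
  · rw [max_eq_right h]
    simpa using sq_nonneg (y - a)
  · rw [max_eq_left h]

variable {μ : Measure ℝ} [IsProbabilityMeasure μ]

lemma integ_max' (hL2 : Integrable (fun x : ℝ => x ^ 2) μ) (a : ℝ) :
    Integrable (fun y : ℝ => max (a - y) 0) μ := by
  refine (((integ_id hL2).abs.add (integrable_const |a|))).mono'
    (((continuous_const.sub continuous_id).max continuous_const).aestronglyMeasurable) ?_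
  filter_upwards with y
  simp only [norm_eq_abs, Pi.add_apply]
  rcases le_total (a - y) 0 with h | h
  · rw [max_eq_right h, abs_zero]
    positivity
  · rw [max_eq_left h, abs_of_nonneg h]
    cases abs_cases y <;> cases abs_cases a <;> linarith

lemma R1 (hL2 : Integrable (fun x : ℝ => x ^ 2) μ) (a : ℝ) :
    IntegrableOn (fun x => (μ (Ioi x)).toReal) (Ioi a) volume ∧
    ∫ x in Ioi a, (μ (Ioi x)).toReal = ∫ y, max (y - a) 0 ∂μ := by
  have hofQ : ∫⁻ y, ENNReal.ofReal (y - a) ∂μ = ENNReal.ofReal (∫ y, max (y - a) 0 ∂μ) :=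
    calc ∫⁻ y, ENNReal.ofReal (y - a) ∂μ = ∫⁻ y, ENNReal.ofReal (max (y - a) 0) ∂μ :=
          lintegral_congr fun y => (ofReal_max_eq _).symm
      _ = ENNReal.ofReal (∫ y, max (y - a) 0 ∂μ) :=
          (ofReal_integral_eq_lintegral_ofReal (integ_max hL2 a)
            (ae_of_all _ fun y => le_max_right _ _)).symm
  have hne : ∫⁻ x in Ioi a, μ (Ioi x) ≠ ⊤ := by
    rw [lint_G μ a, hofQ]; exact ENNReal.ofReal_ne_top
  refine ⟨integrable_toReal_of_lintegral_ne_top (hGmble μ).aemeasurable hne, ?_⟩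
  rw [integral_toReal ((hGmble μ).aemeasurable) (ae_of_all _ fun x => measure_lt_top μ _),
    lint_G μ a, hofQ]
  exact ENNReal.toReal_ofReal (integral_nonneg fun y => le_max_right _ _)

lemma R2 (hL2 : Integrable (fun x : ℝ => x ^ 2) μ) (a : ℝ) :
    IntegrableOn (fun x => (μ (Iic x)).toReal) (Iio a) volume ∧
    ∫ x in Iio a, (μ (Iic x)).toReal = ∫ y, max (a - y) 0 ∂μ := by
  have hofQ : ∫⁻ y, ENNReal.ofReal (a - y) ∂μ = ENNReal.ofReal (∫ y, max (a - y) 0 ∂μ) :=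
    calc ∫⁻ y, ENNReal.ofReal (a - y) ∂μ = ∫⁻ y, ENNReal.ofReal (max (a - y) 0) ∂μ :=
          lintegral_congr fun y => (ofReal_max_eq _).symm
      _ = ENNReal.ofReal (∫ y, max (a - y) 0 ∂μ) :=
          (ofReal_integral_eq_lintegral_ofReal (integ_max' hL2 a)
            (ae_of_all _ fun y => le_max_right _ _)).symm
  have hne : ∫⁻ x in Iio a, μ (Iic x) ≠ ⊤ := by
    rw [lint_F μ a, hofQ]; exact ENNReal.ofReal_ne_top
  refine ⟨integrable_toReal_of_lintegral_ne_top (hFmble μ).aemeasurable hne, ?_⟩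
  rw [integral_toReal ((hFmble μ).aemeasurable) (ae_of_all _ fun x => measure_lt_top μ _),
    lint_F μ a, hofQ]
  exact ENNReal.toReal_ofReal (integral_nonneg fun y => le_max_right _ _)

lemma R3 (hL2 : Integrable (fun x : ℝ => x ^ 2) μ) (a : ℝ) :
    IntegrableOn (fun x => (x - a) * (μ (Ioi x)).toReal) (Ioi a) volume ∧
    ∫ x in Ioi a, (x - a) * (μ (Ioi x)).toReal = (∫ y, max (y - a) 0 ^ 2 ∂μ) / 2 := by
  have hcong : ∫⁻ x in Ioi a, ENNReal.ofReal (x - a) * μ (Ioi x)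
      = ∫⁻ x in Ioi a, ENNReal.ofReal ((x - a) * (μ (Ioi x)).toReal) := by
    refine setLIntegral_congr_fun measurableSet_Ioi (fun x hx => ?_)
    rw [ENNReal.ofReal_mul (le_of_lt (sub_pos.2 hx)), ENNReal.ofReal_toReal (measure_ne_top μ _)]
  have hS2int : Integrable (fun y : ℝ => max (y - a) 0 ^ 2 / 2) μ := (integ_maxsq hL2 a).div_const 2
  have hofS : ∫⁻ y, ENNReal.ofReal (max (y - a) 0 ^ 2 / 2) ∂μ
      = ENNReal.ofReal ((∫ y, max (y - a) 0 ^ 2 ∂μ) / 2) := by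
    rw [← integral_div]
    exact (ofReal_integral_eq_lintegral_ofReal hS2int (ae_of_all _ fun y => by positivity)).symm
  have haemble : AEMeasurable (fun x => ENNReal.ofReal ((x - a) * (μ (Ioi x)).toReal))
      (volume.restrict (Ioi a)) :=
    (((measurable_id.sub_const a).mul (hGmble μ).ennreal_toReal).ennreal_ofReal).aemeasurable
  have hfin : ∫⁻ x in Ioi a, ENNReal.ofReal ((x - a) * (μ (Ioi x)).toReal) ≠ ⊤ := by
    rw [← hcong, lint_xG μ a, hofS]; exact ENNReal.ofReal_ne_top
  have hint0 := integrable_toReal_of_lintegral_ne_top haemble hfin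
  have hae : (fun x => ((ENNReal.ofReal ((x - a) * (μ (Ioi x)).toReal))).toReal)
      =ᵐ[volume.restrict (Ioi a)] fun x => (x - a) * (μ (Ioi x)).toReal := by
    filter_upwards [ae_restrict_mem measurableSet_Ioi] with x hx
    exact ENNReal.toReal_ofReal (mul_nonneg (le_of_lt (sub_pos.2 hx)) ENNReal.toReal_nonneg)
  refine ⟨hint0.congr hae, ?_⟩
  rw [← integral_congr_ae hae,
    integral_toReal haemble (ae_of_all _ fun x => ENNReal.ofReal_lt_top),
    ← hcong, lint_xG μ a, hofS]
  have hnn : (0:ℝ) ≤ (∫ y, max (y - a) 0 ^ 2 ∂μ) / 2 := by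
    have := integral_nonneg (f := fun y : ℝ => max (y - a) 0 ^ 2) (fun y : ℝ => (by positivity : (0:ℝ) ≤ max (y - a) 0 ^ 2)) (μ := μ)
    linarith
  exact ENNReal.toReal_ofReal hnn

lemma G_eq (μ : Measure ℝ) [IsProbabilityMeasure μ] (x : ℝ) :
    (μ (Ioi x)).toReal = 1 - (μ (Iic x)).toReal := by
  have h : μ (Ioi x) = 1 - μ (Iic x) := by
    rw [← compl_Iic]
    exact prob_compl_eq_one_sub measurableSet_Iic
  rw [h, ENNReal.toReal_sub_of_le prob_le_one ENNReal.one_ne_top, ENNReal.toReal_one]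

lemma gibbs {u v : ℝ} (hu0 : 0 ≤ u) (hv : 0 < v) :
    0 ≤ u * Real.log u - u * Real.log v + v - u := by
  rcases eq_or_lt_of_le hu0 with h | h
  · rw [← h]; simp; linarith
  · have hlog := Real.log_le_sub_one_of_pos (div_pos hv h)
    rw [Real.log_div hv.ne' h.ne'] at hlog
    have h2 : u * (Real.log v - Real.log u) ≤ u * (v / u - 1) :=
      mul_le_mul_of_nonneg_left hlog h.le
    have h3 : u * (v / u - 1) = v - u := by field_simp
    nlinarith

lemma gibbs_eq {u v : ℝ} (hu0 : 0 ≤ u) (hv : 0 < v)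
    (heq : u * Real.log u - u * Real.log v + v - u = 0) : u = v := by
  rcases eq_or_lt_of_le hu0 with h | h
  · exfalso; rw [← h] at heq; simp at heq; linarith
  · by_contra hne
    have hne' : v / u ≠ 1 := by
      intro hc
      exact hne (by field_simp at hc; linarith)
    have hlog := Real.log_lt_sub_one_of_pos (div_pos hv h) hne'
    rw [Real.log_div hv.ne' h.ne'] at hlog
    have h2 : u * (Real.log v - Real.log u) < u * (v / u - 1) :=
      mul_lt_mul_of_pos_left hlog h
    have h3 : u * (v / u - 1) = v - u := by field_simp
    nlinarith

lemma stdExp_Ioi (t : ℝ) : stdExp (Ioi t) = ENNReal.ofReal (min 1 (Real.exp (-t))) := by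
  rw [stdExp, withDensity_apply _ measurableSet_Ioi]
  have hexpint : ∀ c : ℝ, IntegrableOn (fun y => Real.exp (-y)) (Ioi c) := by
    intro c
    have := exp_neg_integrableOn_Ioi c one_pos
    simpa using this
  rcases le_or_gt t 0 with h | h
  · have hsplit : Ioi t = Ioc t 0 ∪ Ioi (0:ℝ) := (Ioc_union_Ioi_eq_Ioi h).symm
    rw [hsplit, lintegral_union measurableSet_Ioi (Ioc_disjoint_Ioi le_rfl)]
    have h1 : ∫⁻ y in Ioc t 0, ENNReal.ofReal (if 0 < y then Real.exp (-y) else 0) = 0 := by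
      rw [setLIntegral_congr_fun measurableSet_Ioc
        (fun y hy => by rw [if_neg (not_lt.2 hy.2)]), lintegral_const]
      simp
    have h2 : ∫⁻ y in Ioi (0:ℝ), ENNReal.ofReal (if 0 < y then Real.exp (-y) else 0)
        = ENNReal.ofReal 1 := by
      have e : ∀ y ∈ Ioi (0:ℝ), ENNReal.ofReal (if 0 < y then Real.exp (-y) else 0)
          = (fun y => ENNReal.ofReal (Real.exp (-y))) y := fun y hy => by
        rw [if_pos (mem_Ioi.1 hy)]
      rw [setLIntegral_congr_fun measurableSet_Ioi e,
        ← ofReal_integral_eq_lintegral_ofReal (hexpint 0)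
          (ae_of_all _ fun y => (Real.exp_pos _).le),
        integral_exp_neg_Ioi]
      simp
    rw [h1, h2, zero_add, min_eq_left (Real.one_le_exp (by linarith))]
  · have e : ∀ y ∈ Ioi t, ENNReal.ofReal (if 0 < y then Real.exp (-y) else 0)
        = (fun y => ENNReal.ofReal (Real.exp (-y))) y := fun y hy => by
      rw [if_pos (h.trans (mem_Ioi.1 hy))]
    rw [setLIntegral_congr_fun measurableSet_Ioi e,
      ← ofReal_integral_eq_lintegral_ofReal (hexpint t)
        (ae_of_all _ fun y => (Real.exp_pos _).le),
      integral_exp_neg_Ioi, min_eq_right (Real.exp_le_one_iff.2 (by linarith))]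

lemma stdExp_Iic_zero : stdExp (Iic (0:ℝ)) = 0 := by
  rw [stdExp, withDensity_apply _ measurableSet_Iic]
  rw [setLIntegral_congr_fun measurableSet_Iic
    (fun y hy => by rw [if_neg (not_lt.2 hy)]), lintegral_const]
  simp

instance : IsProbabilityMeasure stdExp := by
  constructor
  rw [← Iic_union_Ioi (a := (0:ℝ)),
    measure_union (Iic_disjoint_Ioi le_rfl) measurableSet_Ioi, stdExp_Iic_zero, stdExp_Ioi]
  simp

lemma int_texp : ∫ x in Ioi (0:ℝ), x * Real.exp (-x) = 1 := by
  have hG := Real.Gamma_eq_integral (by norm_num : (0:ℝ) < 2)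
  have h2 : Real.Gamma 2 = 1 := by
    rw [show (2:ℝ) = 1 + 1 by norm_num, Real.Gamma_add_one one_ne_zero, Real.Gamma_one, mul_one]
  have e : ∫ x in Ioi (0:ℝ), x * Real.exp (-x)
      = ∫ x in Ioi (0:ℝ), Real.exp (-x) * x ^ ((2:ℝ) - 1) := by
    refine setIntegral_congr_fun measurableSet_Ioi fun x hx => ?_
    rw [show (2:ℝ) - 1 = 1 by norm_num, Real.rpow_one]
    ring
  rw [e, ← hG, h2]


lemma M1 (hL2 : Integrable (fun x : ℝ => x ^ 2) μ) (a : ℝ) :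
    (∫ y, max (y - a) 0 ∂μ) - (∫ y, max (a - y) 0 ∂μ) = (∫ y, y ∂μ) - a := by
  rw [← integral_sub (integ_max hL2 a) (integ_max' hL2 a)]
  have e : (fun y => max (y - a) 0 - max (a - y) 0) = fun y : ℝ => y - a := by
    funext y; rcases le_total y a with h | h
    · rw [max_eq_right (by linarith), max_eq_left (by linarith)]; ring
    · rw [max_eq_left (by linarith), max_eq_right (by linarith)]; ring
  rw [e, integral_sub (integ_id hL2) (integrable_const a), integral_const]
  simp

lemma M2 (hL2 : Integrable (fun x : ℝ => x ^ 2) μ) (a : ℝ) :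
    ∫ y, (y - a) ^ 2 ∂μ = mVar μ + ((∫ y, y ∂μ) - a) ^ 2 := by
  set m := ∫ y, y ∂μ with hm
  have e : (fun y : ℝ => (y - a) ^ 2)
      = fun y => ((y - m) ^ 2 + (2 * (m - a)) * (y - m)) + (m - a) ^ 2 := by
    funext y; ring
  have h1 : Integrable (fun y : ℝ => (y - m) ^ 2) μ := integ_sq' hL2 m
  have h2 : Integrable (fun y : ℝ => (2 * (m - a)) * (y - m)) μ :=
    ((integ_id hL2).sub (integrable_const m)).const_mul _
  have h12 : Integrable (fun y : ℝ => (y - m) ^ 2 + 2 * (m - a) * (y - m)) μ := h1.add h2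
  rw [e, integral_add h12 (integrable_const _), integral_add h1 h2, integral_const_mul,
    integral_sub (integ_id hL2) (integrable_const m), integral_const]
  have hmv : mVar μ = ∫ y, (y - m) ^ 2 ∂μ := rfl
  simp [hmv]
  exact Or.inr (sub_eq_zero.2 hm.symm)

set_option maxHeartbeats 1000000 in
/-- For a square-integrable real random variable `X` (with law `μ`) with
continuous cdf and unit variance, the cumulative residual entropy satisfies
`Δ̄_0(X) = −∫ F̄ log F̄ ≤ 1`, with equality iff `X − E[X] + 1` is standard exponential. -/
theorem exponential_maximizes_CRE (μ : Measure ℝ) [IsProbabilityMeasure μ]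
    (hcont : Continuous fun x => (μ (Iic x)).toReal)
    (hL2 : Integrable (fun x : ℝ => x ^ 2) μ)
    (hvar : mVar μ = 1) :
    (-∫ x : ℝ, (μ (Ioi x)).toReal * Real.log ((μ (Ioi x)).toReal)) ≤ 1
    ∧ ((-∫ x : ℝ, (μ (Ioi x)).toReal * Real.log ((μ (Ioi x)).toReal)) = 1
        ↔ Measure.map (fun x => x - (∫ y, y ∂μ) + 1) μ = stdExp) := by
  set m := ∫ y, y ∂μ with hm
  set a := m - 1 with ha
  have hGeq : (fun x => (μ (Ioi x)).toReal) = fun x => 1 - (μ (Iic x)).toReal := funext (G_eq μ)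
  have hGc : Continuous fun x : ℝ => (μ (Ioi x)).toReal := by
    rw [hGeq]; exact continuous_const.sub hcont
  have hG0 : ∀ x : ℝ, 0 ≤ (μ (Ioi x)).toReal := fun x => ENNReal.toReal_nonneg
  have hG1 : ∀ x : ℝ, (μ (Ioi x)).toReal ≤ 1 := fun x => by
    rw [G_eq]; linarith [ENNReal.toReal_nonneg (a := μ (Iic x))]
  set v : ℝ → ℝ := fun x => min 1 (Real.exp (a - x)) with hv
  have hvpos : ∀ x, 0 < v x := fun x => lt_min one_pos (Real.exp_pos _)
  have hlogv : ∀ x, Real.log (v x) = -(max (x - a) 0) := by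
    intro x; rcases le_total x a with h | h
    · simp only [hv]
      rw [min_eq_left (Real.one_le_exp (by linarith)), Real.log_one,
        max_eq_right (by linarith), neg_zero]
    · simp only [hv]
      rw [min_eq_right (Real.exp_le_one_iff.2 (by linarith)), Real.log_exp,
        max_eq_left (by linarith)]
      ring
  set f : ℝ → ℝ := fun x => (μ (Ioi x)).toReal * Real.log ((μ (Ioi x)).toReal) with hf
  set i1 : ℝ → ℝ := fun x => (μ (Ioi x)).toReal * max (x - a) 0 with hi1d
  set i2 : ℝ → ℝ := fun x => v x - (μ (Ioi x)).toReal with hi2d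
  have hε : ∀ x, f x + i1 x + i2 x = (μ (Ioi x)).toReal * Real.log ((μ (Ioi x)).toReal)
      - (μ (Ioi x)).toReal * Real.log (v x) + v x - (μ (Ioi x)).toReal := by
    intro x
    simp only [hf, hi1d, hi2d, hlogv x]
    ring
  have hψnn : ∀ x, 0 ≤ f x + i1 x + i2 x := by
    intro x
    rw [hε x]
    exact gibbs (hG0 x) (hvpos x)
  have hi1ind : i1 = (Ioi a).indicator (fun x => (x - a) * (μ (Ioi x)).toReal) := by
    funext x
    rcases le_or_gt x a with h' | h'
    · rw [Set.indicator_of_notMem (by simpa using h')]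
      simp only [hi1d]
      rw [max_eq_right (by linarith), mul_zero]
    · rw [Set.indicator_of_mem (mem_Ioi.2 h')]
      simp only [hi1d]
      rw [max_eq_left (by linarith)]
      ring
  have hi1int : Integrable i1 := by
    rw [hi1ind]; exact (integrable_indicator_iff measurableSet_Ioi).2 (R3 hL2 a).1
  have hi1val : ∫ x, i1 x = (∫ y, max (y - a) 0 ^ 2 ∂μ) / 2 := by
    rw [hi1ind, integral_indicator measurableSet_Ioi]; exact (R3 hL2 a).2
  have hFIic : IntegrableOn (fun x => (μ (Iic x)).toReal) (Iic a) :=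
    (R2 hL2 a).1.congr_set_ae Iio_ae_eq_Iic.symm
  have heqIic : EqOn (fun x => (μ (Iic x)).toReal) i2 (Iic a) := by
    intro x hx
    simp only [hi2d, hv]
    rw [min_eq_left (Real.one_le_exp (by linarith [mem_Iic.1 hx])), G_eq]
    ring
  have hi2Iic : IntegrableOn i2 (Iic a) := hFIic.congr_fun heqIic measurableSet_Iic
  have hexpa : IntegrableOn (fun x => Real.exp (a - x)) (Ioi a) := by
    have h0 := exp_neg_integrableOn_Ioi a one_pos
    have e : (fun x : ℝ => Real.exp (a - x)) = fun x => Real.exp a * Real.exp (-1 * x) := by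
      funext x; rw [← Real.exp_add]; ring_nf
    rw [e]
    exact Integrable.const_mul h0 (Real.exp a)
  have heqIoi : EqOn (fun x => Real.exp (a - x) - (μ (Ioi x)).toReal) i2 (Ioi a) := by
    intro x hx
    simp only [hi2d, hv]
    rw [min_eq_right (Real.exp_le_one_iff.2 (by linarith [mem_Ioi.1 hx]))]
  have hsub : IntegrableOn (fun x => Real.exp (a - x) - (μ (Ioi x)).toReal) (Ioi a) :=
    hexpa.sub (R1 hL2 a).1
  have hi2Ioi : IntegrableOn i2 (Ioi a) := hsub.congr_fun heqIoi measurableSet_Ioi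
  have hi2int : Integrable i2 := by
    rw [← integrableOn_univ, ← Iic_union_Ioi (a := a)]
    exact hi2Iic.union hi2Ioi
  have hIoiexp : ∫ x in Ioi a, Real.exp (a - x) = 1 := by
    have e : ∀ x ∈ Ioi a, Real.exp (a - x) = Real.exp a * Real.exp (-x) := by
      intro x _; rw [← Real.exp_add]; ring_nf
    rw [setIntegral_congr_fun measurableSet_Ioi e, integral_const_mul, integral_exp_neg_Ioi,
      ← Real.exp_add]
    simp
  have hi2val : ∫ x, i2 x = (∫ y, max (a - y) 0 ∂μ) + 1 - (∫ y, max (y - a) 0 ∂μ) := by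
    rw [← integral_add_compl measurableSet_Iic hi2int, compl_Iic]
    have h1 : ∫ x in Iic a, i2 x = ∫ y, max (a - y) 0 ∂μ := by
      rw [← setIntegral_congr_fun measurableSet_Iic heqIic,
        setIntegral_congr_set (Iio_ae_eq_Iic (a := a)).symm]
      exact (R2 hL2 a).2
    have h2 : ∫ x in Ioi a, i2 x = 1 - ∫ y, max (y - a) 0 ∂μ := by
      rw [← setIntegral_congr_fun measurableSet_Ioi heqIoi,
        integral_sub hexpa (R1 hL2 a).1, hIoiexp, (R1 hL2 a).2]
    rw [h1, h2]
    ring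
  have hfc : Continuous f := by
    have e : f = fun x => -Real.negMulLog ((μ (Ioi x)).toReal) := by
      funext x; simp only [hf, Real.negMulLog]; ring
    rw [e]
    exact (Real.continuous_negMulLog.comp hGc).neg
  have hfint : Integrable f := by
    refine (hi1int.add hi2int).mono' hfc.aestronglyMeasurable ?_
    filter_upwards with x
    have h1 := hψnn x
    have h2 : f x ≤ 0 := by
      have h3 := Real.log_nonpos (hG0 x) (hG1 x)
      have h4 := hG0 x
      simp only [hf]
      nlinarith
    rw [Real.norm_eq_abs, abs_of_nonpos h2]
    simp only [Pi.add_apply]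
    linarith
  set S := ∫ y, max (y - a) 0 ^ 2 ∂μ with hS
  have hfi1 : Integrable (fun x => f x + i1 x) := hfint.add hi1int
  have hψint : Integrable (fun x => f x + i1 x + i2 x) := hfi1.add hi2int
  have hQP : (∫ y, max (a - y) 0 ∂μ) + 1 - (∫ y, max (y - a) 0 ∂μ) = 0 := by
    have h5 := M1 hL2 a
    have h6 : m - a = 1 := by rw [ha]; ring
    rw [← hm] at h5
    linarith
  have hψval : ∫ x, (f x + i1 x + i2 x) = (∫ x, f x) + S / 2 := by
    rw [integral_add hfi1 hi2int, integral_add hfint hi1int, hi1val, hi2val, hQP]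
    ring
  have hψ0 : 0 ≤ ∫ x, (f x + i1 x + i2 x) := integral_nonneg hψnn
  have hSle : S ≤ 2 := by
    have hle : S ≤ ∫ y, (y - a) ^ 2 ∂μ := by
      refine integral_mono (integ_maxsq hL2 a) (integ_sq' hL2 a) (fun y => ?_)
      rcases le_total (y - a) 0 with h | h
      · rw [max_eq_right h]; simpa using sq_nonneg (y - a)
      · rw [max_eq_left h]
    have h7 := M2 hL2 a
    rw [← hm, hvar] at h7
    have h6 : m - a = 1 := by rw [ha]; ring
    rw [h6] at h7
    linarith [hle, h7.le, h7.ge]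
  have hkey : (-∫ x, f x) = S / 2 - ∫ x, (f x + i1 x + i2 x) := by
    rw [hψval]; ring
  constructor
  · linarith
  constructor
  · intro h1
    have hψzero : ∫ x, (f x + i1 x + i2 x) = 0 := by linarith
    have hae : (fun x => f x + i1 x + i2 x) =ᵐ[(volume : Measure ℝ)] 0 :=
      (integral_eq_zero_iff_of_nonneg hψnn hψint).1 hψzero
    have hi1c : Continuous i1 :=
      hGc.mul ((continuous_id.sub continuous_const).max continuous_const)
    have hi2c : Continuous i2 :=
      (continuous_const.min (Real.continuous_exp.comp (continuous_const.sub continuous_id))).sub hGc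
    have hzero : (fun x => f x + i1 x + i2 x) = 0 :=
      (Continuous.ae_eq_iff_eq volume ((hfc.add hi1c).add hi2c) continuous_const).1 hae
    have hGv : ∀ x, (μ (Ioi x)).toReal = v x := by
      intro x
      have hx : f x + i1 x + i2 x = 0 := congrFun hzero x
      rw [hε x] at hx
      exact gibbs_eq (hG0 x) (hvpos x) hx
    have hμv : ∀ s : ℝ, μ (Ioi s) = ENNReal.ofReal (v s) := fun s => by
      rw [← hGv s, ENNReal.ofReal_toReal (measure_ne_top μ _)]
    have hφm : Measurable fun x : ℝ => x - m + 1 := (measurable_id.sub_const m).add_const 1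
    haveI : IsProbabilityMeasure (Measure.map (fun x : ℝ => x - m + 1) μ) :=
      Measure.isProbabilityMeasure_map hφm.aemeasurable
    refine Measure.ext_of_Iic _ _ (fun t => ?_)
    rw [Measure.map_apply hφm measurableSet_Iic]
    have hpre : (fun x : ℝ => x - m + 1) ⁻¹' (Iic t) = Iic (t + m - 1) := by
      ext x; simp only [mem_preimage, mem_Iic]; constructor <;> intro <;> linarith
    rw [hpre]
    have hIicμ : μ (Iic (t + m - 1)) = 1 - μ (Ioi (t + m - 1)) := by
      rw [← compl_Ioi]; exact prob_compl_eq_one_sub measurableSet_Ioi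
    have hstd : stdExp (Iic t) = 1 - stdExp (Ioi t) := by
      rw [← compl_Ioi]; exact prob_compl_eq_one_sub measurableSet_Ioi
    have hvt : v (t + m - 1) = min 1 (Real.exp (-t)) := by
      simp only [hv]
      rw [show a - (t + m - 1) = -t by rw [ha]; ring]
    rw [hIicμ, hμv, hstd, stdExp_Ioi, hvt]
  · intro hmap
    have hφm : Measurable fun x : ℝ => x - m + 1 := (measurable_id.sub_const m).add_const 1
    have hGv : ∀ x, (μ (Ioi x)).toReal = min 1 (Real.exp (a - x)) := by
      intro x
      have hpre : (fun y : ℝ => y - m + 1) ⁻¹' (Ioi (x - m + 1)) = Ioi x := by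
        ext y; simp only [mem_preimage, mem_Ioi]; constructor <;> intro <;> linarith
      have h8 : μ (Ioi x) = stdExp (Ioi (x - m + 1)) := by
        rw [← hmap, Measure.map_apply hφm measurableSet_Ioi, hpre]
      rw [h8, stdExp_Ioi, show -(x - m + 1) = a - x by rw [ha]; ring]
      exact ENNReal.toReal_ofReal (le_min one_pos.le (Real.exp_pos _).le)
    have hfeq : f = fun x => -((Ioi (0:ℝ)).indicator (fun t => t * Real.exp (-t)) (x - a)) := by
      funext x
      simp only [hf]
      rcases le_or_gt x a with h' | h'
      · rw [Set.indicator_of_notMem (by simpa using (by linarith : ¬ (0:ℝ) < x - a))]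
        rw [hGv x, min_eq_left (Real.one_le_exp (by linarith))]
        simp
      · rw [Set.indicator_of_mem (mem_Ioi.2 (by linarith : (0:ℝ) < x - a))]
        rw [hGv x, min_eq_right (Real.exp_le_one_iff.2 (by linarith)), Real.log_exp,
          show -(x - a) = a - x by ring]
        ring
    have hval : ∫ x, f x = -1 := by
      rw [hfeq, integral_neg,
        integral_sub_right_eq_self ((Ioi (0:ℝ)).indicator (fun t => t * Real.exp (-t))) a,
        integral_indicator measurableSet_Ioi, int_texp]
    rw [hval]
    norm_num
end
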